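/- arXiv:0908.0447 — 7 statements merged into one kernel-verified Lean document; each statement's English description precedes it below -/
import Mathlib

section
/- Let 0 < a < b < 1/2 and 0 < δ < 1. Then there exists a real signed measure ρ supported on a finite subset of the interval (a,b) such that ∫ dρ = 1, |∫ s^k dρ(s)| < δ for all integers k ≥ 1, and the total variation ∫|dρ| is at most δ^{-c}, where c > 0 is a constant depending only on a and b. -/
open Finset Polynomial

noncomputable section

namespace Kahane

/-- elementary symmetric functions of a list -/
def esym : List ℝ → ℕ → ℝ
  | _, 0 => 1
  | [], _ + 1 => 0
  | x :: L, i + 1 => esym L (i + 1) + x * esym L i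

/-- complete homogeneous symmetric functions of a list -/
def hsym : List ℝ → ℕ → ℝ
  | _, 0 => 1
  | [], _ + 1 => 0
  | x :: L, d + 1 => hsym L (d + 1) + x * hsym (x :: L) d
  termination_by L d => (L.length, d)

/-- `hsym` with integer index, zero for negative index -/
def hz (L : List ℝ) (d : ℤ) : ℝ := if 0 ≤ d then hsym L d.toNat else 0

@[simp] lemma esym_zero (L : List ℝ) : esym L 0 = 1 := by cases L <;> rfl
@[simp] lemma esym_nil_succ (i : ℕ) : esym [] (i + 1) = 0 := rfl
lemma esym_cons (x : ℝ) (L : List ℝ) (i : ℕ) :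
    esym (x :: L) (i + 1) = esym L (i + 1) + x * esym L i := rfl

@[simp] lemma hsym_zero (L : List ℝ) : hsym L 0 = 1 := by cases L <;> simp [hsym]
@[simp] lemma hsym_nil_succ (d : ℕ) : hsym [] (d + 1) = 0 := by simp [hsym]
lemma hsym_cons (x : ℝ) (L : List ℝ) (d : ℕ) :
    hsym (x :: L) (d + 1) = hsym L (d + 1) + x * hsym (x :: L) d := by
  rw [hsym]

@[simp] lemma hz_neg (L : List ℝ) {d : ℤ} (h : d < 0) : hz L d = 0 := by
  simp [hz, not_le.mpr h]

@[simp] lemma hz_zero (L : List ℝ) : hz L 0 = 1 := by simp [hz]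

lemma hz_coe (L : List ℝ) (n : ℕ) : hz L (n : ℤ) = hsym L n := by
  simp [hz]

lemma hz_nil {d : ℤ} (h : 1 ≤ d) : hz [] d = 0 := by
  obtain ⟨n, rfl⟩ : ∃ n : ℕ, d = (n : ℤ) + 1 := ⟨(d - 1).toNat, by omega⟩
  rw [show ((n : ℤ) + 1) = ((n + 1 : ℕ) : ℤ) by push_cast; ring, hz_coe]
  simp

lemma hz_cons (x : ℝ) (L : List ℝ) (d : ℤ) :
    hz (x :: L) d = hz L d + x * hz (x :: L) (d - 1) := by
  rcases lt_trichotomy d 0 with h | rfl | h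
  · rw [hz_neg _ h, hz_neg _ h, hz_neg _ (by omega), mul_zero, add_zero]
  · simp [hz_neg _ (show (0:ℤ) - 1 < 0 by norm_num)]
  · obtain ⟨n, rfl⟩ : ∃ n : ℕ, d = ((n + 1 : ℕ) : ℤ) := ⟨(d - 1).toNat, by omega⟩
    rw [hz_coe, hz_coe, show ((n + 1 : ℕ) : ℤ) - 1 = (n : ℤ) by push_cast; ring, hz_coe,
      hsym_cons]

lemma esym_eq_zero_of_lt : ∀ (L : List ℝ) {i : ℕ}, L.length < i → esym L i = 0 := by
  intro L
  induction L with
  | nil => intro i hi; obtain ⟨j, rfl⟩ : ∃ j, i = j + 1 := ⟨i - 1, by omega⟩; simp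
  | cons x M ih =>
    intro i hi
    obtain ⟨j, rfl⟩ : ∃ j, i = j + 1 := ⟨i - 1, by omega⟩
    simp only [List.length_cons] at hi
    rw [esym_cons, ih (by omega), ih (by omega), mul_zero, add_zero]

lemma esym_length : ∀ L : List ℝ, esym L L.length = L.prod := by
  intro L
  induction L with
  | nil => simp
  | cons x M ih =>
    simp only [List.length_cons, List.prod_cons]
    rw [esym_cons, esym_eq_zero_of_lt M (by omega), ih, zero_add]

lemma hsym_nonneg : ∀ (L : List ℝ), (∀ y ∈ L, 0 ≤ y) → ∀ (d : ℕ), 0 ≤ hsym L d := by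
  intro L
  induction L with
  | nil => intro _ d; cases d <;> simp
  | cons x M ih =>
    intro hL d
    induction d with
    | zero => simp
    | succ e ihe =>
      rw [hsym_cons]
      have hx : 0 ≤ x := hL x (by simp)
      have := ih (fun y hy => hL y (by simp [hy])) (e + 1)
      positivity

lemma hz_nonneg (L : List ℝ) (hL : ∀ y ∈ L, 0 ≤ y) (d : ℤ) : 0 ≤ hz L d := by
  unfold hz
  split
  · exact hsym_nonneg L hL _
  · exact le_refl 0

lemma hsym_le (B : ℝ) (hB : 0 ≤ B) :
    ∀ (L : List ℝ), (∀ y ∈ L, 0 ≤ y ∧ y ≤ B) → ∀ (d : ℕ),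
      hsym L d ≤ 2 ^ (L.length + d) * B ^ d := by
  intro L
  induction L with
  | nil =>
    intro _ d
    cases d with
    | zero => simp
    | succ e => simp only [hsym_nil_succ]; positivity
  | cons x M ih =>
    intro hL d
    have hx0 : 0 ≤ x := (hL x (by simp)).1
    have hxB : x ≤ B := (hL x (by simp)).2
    have hM : ∀ y ∈ M, 0 ≤ y ∧ y ≤ B := fun y hy => hL y (by simp [hy])
    induction d with
    | zero =>
      rw [hsym_zero, pow_zero, mul_one, Nat.add_zero]
      exact one_le_pow₀ one_le_two
    | succ e ihe =>
      rw [hsym_cons]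
      have h1 : hsym M (e + 1) ≤ 2 ^ (M.length + (e + 1)) * B ^ (e + 1) := ih hM (e + 1)
      have h2 : x * hsym (x :: M) e ≤ B * (2 ^ ((x :: M).length + e) * B ^ e) := by
        apply mul_le_mul hxB ihe (hsym_nonneg _ (fun y hy => (hL y hy).1) e) hB
      calc hsym M (e + 1) + x * hsym (x :: M) e
          ≤ 2 ^ (M.length + (e + 1)) * B ^ (e + 1) + B * (2 ^ ((x :: M).length + e) * B ^ e) :=
            add_le_add h1 h2
        _ ≤ 2 ^ ((x :: M).length + (e + 1)) * B ^ (e + 1) := by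
            simp only [List.length_cons]
            rw [show M.length + 1 + (e + 1) = (M.length + (e + 1)) + 1 by ring]
            rw [pow_succ B e, pow_succ 2 (M.length + (e+1))]
            ring_nf
            nlinarith [pow_nonneg hB e, pow_nonneg (show (0:ℝ) ≤ 2 by norm_num) (M.length + e),
              pow_nonneg (show (0:ℝ) ≤ 2 by norm_num) (M.length + (e+1))]


/-- the fundamental identity relating `esym` and `hsym` -/
lemma beta : ∀ (L : List ℝ) (d : ℤ), 1 ≤ d →
    ∑ i ∈ Finset.range (L.length + 1), (-1 : ℝ) ^ i * esym L i * hz L (d - i) = 0 := by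
  intro L
  induction L with
  | nil =>
    intro d hd
    simp [hz_nil hd]
  | cons x M ih =>
    intro d hd
    set n := M.length with hn
    have key : ∀ i : ℕ, hz (x :: M) (d - i) - x * hz (x :: M) (d - i - 1) = hz M (d - i) := by
      intro i
      have := hz_cons x M (d - i)
      linarith [this]
    have expand : ∑ i ∈ Finset.range ((x :: M).length + 1),
        (-1 : ℝ) ^ i * esym (x :: M) i * hz (x :: M) (d - i)
        = ∑ i ∈ Finset.range (n + 1), (-1 : ℝ) ^ i * esym M i *
            (hz (x :: M) (d - i) - x * hz (x :: M) (d - i - 1)) := by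
      simp only [List.length_cons]
      rw [Finset.sum_range_succ' (fun i => (-1 : ℝ) ^ i * esym (x :: M) i * hz (x :: M) (d - i))]
      push_cast
      -- LHS = ∑_{i∈range (n+1)} (-1)^(i+1) * esym (x::M) (i+1) * hz (x::M) (d-(i+1)) + 1*1*hz (x::M) d
      have e1 : ∀ i ∈ Finset.range (n + 1),
          (-1 : ℝ) ^ (i + 1) * esym (x :: M) (i + 1) * hz (x :: M) (d - (i + 1))
          = (-((-1 : ℝ) ^ i * esym M (i + 1)) - (-1 : ℝ) ^ i * (x * esym M i))
              * hz (x :: M) (d - 1 - i) := by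
        intro i _
        rw [esym_cons, pow_succ]
        have : d - (↑i + 1) = d - 1 - i := by ring
        rw [this]
        ring
      rw [Finset.sum_congr rfl e1]
      have e2 : ∀ i ∈ Finset.range (n + 1),
          (-1 : ℝ) ^ i * esym M i * (hz (x :: M) (d - i) - x * hz (x :: M) (d - i - 1))
          = (-1 : ℝ) ^ i * esym M i * hz (x :: M) (d - i)
            - ((-1 : ℝ) ^ i * (x * esym M i)) * hz (x :: M) (d - 1 - i) := by
        intro i _
        have : d - i - 1 = d - 1 - i := by ring
        rw [this]; ring
      rw [Finset.sum_congr rfl e2]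
      rw [Finset.sum_sub_distrib]
      -- now need : ∑ (-(-1)^i esym M (i+1) - (-1)^i x esym M i) * hz(x::M)(d-1-i) + hz (x::M) d
      --          = ∑ (-1)^i esym M i hz (x::M) (d - i) - ∑ (-1)^i x esym M i hz (x::M)(d-1-i)
      have e3 : ∑ i ∈ Finset.range (n + 1),
          (-((-1 : ℝ) ^ i * esym M (i + 1)) - (-1 : ℝ) ^ i * (x * esym M i))
            * hz (x :: M) (d - 1 - i)
          = (∑ i ∈ Finset.range (n + 1),
              -((-1 : ℝ) ^ i * esym M (i + 1) * hz (x :: M) (d - 1 - i)))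
            - ∑ i ∈ Finset.range (n + 1),
              ((-1 : ℝ) ^ i * (x * esym M i)) * hz (x :: M) (d - 1 - i) := by
        rw [← Finset.sum_sub_distrib]
        apply Finset.sum_congr rfl
        intro i _; ring
      rw [e3]
      -- reindex the first sum : ∑_{i∈range(n+1)} -(-1)^i esym M (i+1) hz (x::M) (d-1-i)
      --   = ∑_{i∈range(n+2)} (-1)^i esym M i hz (x::M)(d-i) - hz (x::M) d
      have e4 : ∑ i ∈ Finset.range (n + 1),
          -((-1 : ℝ) ^ i * esym M (i + 1) * hz (x :: M) (d - 1 - i))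
          = (∑ i ∈ Finset.range (n + 1 + 1),
              (-1 : ℝ) ^ i * esym M i * hz (x :: M) (d - i)) - hz (x :: M) d := by
        rw [Finset.sum_range_succ' (fun i => (-1 : ℝ) ^ i * esym M i * hz (x :: M) (d - i))]
        push_cast
        simp only [pow_zero, esym_zero, one_mul, Nat.cast_zero, sub_zero]
        rw [add_sub_cancel_right]
        apply Finset.sum_congr rfl
        intro i _
        rw [pow_succ]
        have : d - (↑i + 1) = d - 1 - i := by ring
        rw [this]; ring
      rw [e4, Finset.sum_range_succ (fun i => (-1 : ℝ) ^ i * esym M i * hz (x :: M) (d - i))]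
      rw [esym_eq_zero_of_lt M (by omega)]
      simp only [esym_zero, zero_mul, one_mul, sub_zero, Nat.cast_zero, zero_mul]
      push_cast
      ring
    rw [expand]
    have e5 : ∀ i ∈ Finset.range (n + 1),
        (-1 : ℝ) ^ i * esym M i * (hz (x :: M) (d - i) - x * hz (x :: M) (d - i - 1))
        = (-1 : ℝ) ^ i * esym M i * hz M (d - i) := by
      intro i _
      rw [key i]
    rw [Finset.sum_congr rfl e5]
    exact ih d hd

/-- Vieta: expansion of `∏ (t - y)` in terms of `esym` -/
lemma prod_sub : ∀ (L : List ℝ) (t : ℝ),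
    (L.map (fun y => t - y)).prod
      = ∑ i ∈ Finset.range (L.length + 1), (-1 : ℝ) ^ i * esym L i * t ^ (L.length - i) := by
  intro L
  induction L with
  | nil => intro t; simp
  | cons x M ih =>
    intro t
    set n := M.length with hn
    simp only [List.map_cons, List.prod_cons, List.length_cons]
    rw [ih t]
    -- RHS : ∑_{i ∈ range (n+2)} (-1)^i esym (x::M) i t^(n+1-i)
    rw [Finset.sum_range_succ' (fun i => (-1 : ℝ) ^ i * esym (x :: M) i * t ^ (n + 1 - i))]
    simp only [pow_zero, esym_zero, one_mul, Nat.sub_zero]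
    have e1 : ∀ i ∈ Finset.range (n + 1),
        (-1 : ℝ) ^ (i + 1) * esym (x :: M) (i + 1) * t ^ (n + 1 - (i + 1))
        = -((-1 : ℝ) ^ i * esym M (i + 1) * t ^ (n - i))
          - x * ((-1 : ℝ) ^ i * esym M i * t ^ (n - i)) := by
      intro i _
      rw [esym_cons, pow_succ, Nat.succ_sub_succ]
      ring
    rw [Finset.sum_congr rfl e1, Finset.sum_sub_distrib, ← Finset.mul_sum]
    -- t * P = t^(n+1) + ∑_{i∈range(n+1)} (-1)^(i+1) esym M (i+1) t^(n-i)  (with last term zero)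
    have e2 : t * ∑ i ∈ Finset.range (n + 1), (-1 : ℝ) ^ i * esym M i * t ^ (n - i)
        = t ^ (n + 1) + ∑ i ∈ Finset.range (n + 1),
            -((-1 : ℝ) ^ i * esym M (i + 1) * t ^ (n - i)) := by
      rw [Finset.mul_sum]
      have e3 : ∀ i ∈ Finset.range (n + 1),
          t * ((-1 : ℝ) ^ i * esym M i * t ^ (n - i))
          = (-1 : ℝ) ^ i * esym M i * t ^ (n + 1 - i) := by
        intro i hi
        have hi' : i ≤ n := by simpa [Nat.lt_succ_iff] using hi
        rw [Nat.succ_sub hi', pow_succ]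
        ring
      rw [Finset.sum_congr rfl e3]
      rw [Finset.sum_range_succ' (fun i => (-1 : ℝ) ^ i * esym M i * t ^ (n + 1 - i))]
      simp only [pow_zero, esym_zero, one_mul, Nat.sub_zero]
      have e4 : ∀ i ∈ Finset.range n,
          (-1 : ℝ) ^ (i + 1) * esym M (i + 1) * t ^ (n + 1 - (i + 1))
          = -((-1 : ℝ) ^ i * esym M (i + 1) * t ^ (n - i)) := by
        intro i _
        rw [pow_succ, Nat.succ_sub_succ]
        ring
      rw [Finset.sum_congr rfl e4]
      rw [Finset.sum_range_succ (fun i => -((-1 : ℝ) ^ i * esym M (i + 1) * t ^ (n - i)))]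
      rw [esym_eq_zero_of_lt M (by omega)]
      ring
    have expand : (t - x) * ∑ i ∈ Finset.range (n + 1), (-1 : ℝ) ^ i * esym M i * t ^ (n - i)
        = t * (∑ i ∈ Finset.range (n + 1), (-1 : ℝ) ^ i * esym M i * t ^ (n - i))
          - x * ∑ i ∈ Finset.range (n + 1), (-1 : ℝ) ^ i * esym M i * t ^ (n - i) := by ring
    rw [expand, e2]
    ring

/-- each element of `L` satisfies the linear recurrence given by the char. polynomial -/
lemma root_pow (L : List ℝ) {s : ℝ} (hs : s ∈ L) {k : ℕ} (hk : L.length ≤ k) (hL : L.length ≠ 0) :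
    s ^ k = ∑ i ∈ Finset.range L.length, (-1 : ℝ) ^ i * esym L (i + 1) * s ^ (k - 1 - i) := by
  set n := L.length with hn
  have hzero : (L.map (fun y => s - y)).prod = 0 := by
    apply List.prod_eq_zero
    simp only [List.mem_map]
    exact ⟨s, hs, sub_self s⟩
  rw [prod_sub L s] at hzero
  rw [Finset.sum_range_succ' (fun i => (-1 : ℝ) ^ i * esym L i * s ^ (n - i))] at hzero
  simp only [pow_zero, esym_zero, one_mul, Nat.sub_zero] at hzero
  -- hzero : ∑_{i∈range n} (-1)^(i+1) esym L (i+1) s^(n-(i+1)) + s^n = 0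
  have hsn : s ^ n = ∑ i ∈ Finset.range n, (-1 : ℝ) ^ i * esym L (i + 1) * s ^ (n - 1 - i) := by
    have : ∀ i ∈ Finset.range n,
        (-1 : ℝ) ^ (i + 1) * esym L (i + 1) * s ^ (n - (i + 1))
        = -((-1 : ℝ) ^ i * esym L (i + 1) * s ^ (n - 1 - i)) := by
      intro i hi
      rw [pow_succ]
      have : n - (i + 1) = n - 1 - i := by omega
      rw [this]; ring
    rw [Finset.sum_congr rfl this, Finset.sum_neg_distrib] at hzero
    linarith
  have : s ^ k = s ^ (k - n) * s ^ n := by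
    rw [← pow_add]
    congr 1
    omega
  rw [this, hsn, Finset.mul_sum]
  apply Finset.sum_congr rfl
  intro i hi
  have hi' : i < n := Finset.mem_range.mp hi
  rw [show s ^ (k - n) * ((-1 : ℝ) ^ i * esym L (i + 1) * s ^ (n - 1 - i))
      = (-1 : ℝ) ^ i * esym L (i + 1) * (s ^ (k - n) * s ^ (n - 1 - i)) by ring, ← pow_add]
  congr 2
  omega


section Moments

variable (m : ℕ) (v : ℕ → ℝ)

/-- the list of nodes -/
def nodes : List ℝ := (List.range m).map v

/-- the moments of the Lagrange-at-0 measure -/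
def Mom (k : ℕ) : ℝ :=
  ∑ i ∈ Finset.range m, Polynomial.eval 0 (Lagrange.basis (Finset.range m) v i) * v i ^ k

lemma nodes_length : (nodes m v).length = m := by simp [nodes]

lemma mem_nodes {y : ℝ} : y ∈ nodes m v ↔ ∃ i < m, v i = y := by
  simp [nodes]

lemma nodes_prod : (nodes m v).prod = ∏ i ∈ Finset.range m, v i := by
  induction m with
  | zero => simp [nodes]
  | succ n ih =>
    rw [nodes, List.range_succ, List.map_append, List.prod_append, Finset.prod_range_succ, ← ih]
    simp [nodes]

lemma Mom_zero (hm : 1 ≤ m) (hv : Set.InjOn v (Finset.range m)) : Mom m v 0 = 1 := by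
  have hne : (Finset.range m).Nonempty := by
    exact Finset.nonempty_range_iff.mpr (by omega)
  have := Lagrange.sum_basis hv hne
  have heval := congrArg (Polynomial.eval (0 : ℝ)) this
  rw [Polynomial.eval_finset_sum] at heval
  simp only [Polynomial.eval_one] at heval
  rw [Mom]
  simp only [pow_zero, mul_one]
  exact heval

lemma Mom_small (hv : Set.InjOn v (Finset.range m)) {k : ℕ} (hk1 : 1 ≤ k) (hkm : k < m) :
    Mom m v k = 0 := by
  have hdeg : (Polynomial.X ^ k : Polynomial ℝ).degree < (Finset.range m).card := by
    rw [Polynomial.degree_X_pow, Finset.card_range]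
    exact_mod_cast hkm
  have hinterp := Lagrange.eq_interpolate hv hdeg
  have heval := congrArg (Polynomial.eval (0 : ℝ)) hinterp
  rw [Lagrange.interpolate_apply, Polynomial.eval_finset_sum] at heval
  rw [Polynomial.eval_pow, Polynomial.eval_X, zero_pow (by omega : k ≠ 0)] at heval
  simp only [Polynomial.eval_mul, Polynomial.eval_C, Polynomial.eval_pow,
    Polynomial.eval_X] at heval
  rw [Mom, Finset.sum_congr rfl (fun i (_ : i ∈ Finset.range m) => mul_comm
    (Polynomial.eval 0 (Lagrange.basis (Finset.range m) v i)) (v i ^ k))]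
  exact heval.symm

lemma Mom_rec (hm : 1 ≤ m) {k : ℕ} (hk : m ≤ k) :
    Mom m v k = ∑ i ∈ Finset.range m,
      (-1 : ℝ) ^ i * esym (nodes m v) (i + 1) * Mom m v (k - 1 - i) := by
  have hlen : (nodes m v).length = m := nodes_length m v
  rw [Mom]
  have step : ∀ j ∈ Finset.range m,
      Polynomial.eval 0 (Lagrange.basis (Finset.range m) v j) * v j ^ k
      = ∑ i ∈ Finset.range m, (-1 : ℝ) ^ i * esym (nodes m v) (i + 1) *
          (Polynomial.eval 0 (Lagrange.basis (Finset.range m) v j) * v j ^ (k - 1 - i)) := by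
    intro j hj
    have hmem : v j ∈ nodes m v := (mem_nodes m v).mpr ⟨j, Finset.mem_range.mp hj, rfl⟩
    have := root_pow (nodes m v) hmem (k := k) (by omega) (by omega)
    calc Polynomial.eval 0 (Lagrange.basis (Finset.range m) v j) * v j ^ k
        = Polynomial.eval 0 (Lagrange.basis (Finset.range m) v j) *
            ∑ i ∈ Finset.range (nodes m v).length,
              (-1 : ℝ) ^ i * esym (nodes m v) (i + 1) * v j ^ (k - 1 - i) := by rw [← this]
      _ = _ := by
          rw [hlen, Finset.mul_sum]
          apply Finset.sum_congr rfl
          intro i _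
          ring
  rw [Finset.sum_congr rfl step, Finset.sum_comm]
  apply Finset.sum_congr rfl
  intro i _
  rw [Mom, Finset.mul_sum]

lemma Mom_closed (hm : 1 ≤ m) (hv : Set.InjOn v (Finset.range m)) :
    ∀ k : ℕ, 1 ≤ k →
      Mom m v k = (-1 : ℝ) ^ (m - 1) * (nodes m v).prod * hz (nodes m v) ((k : ℤ) - m) := by
  intro k
  induction k using Nat.strong_induction_on with
  | _ k ih =>
    intro hk1
    rcases lt_or_ge k m with hkm | hkm
    · rw [Mom_small m v hv hk1 hkm, hz_neg _ (by omega), mul_zero]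
    rcases eq_or_lt_of_le hkm with rfl | hkm'
    · -- k = m
      rw [Mom_rec m v hm (le_refl m)]
      rw [Finset.sum_eq_single (m - 1)]
      · have hesym : esym (nodes m v) m = (nodes m v).prod := by
          have h := esym_length (nodes m v)
          rwa [nodes_length] at h
        rw [show m - 1 - (m - 1) = 0 by omega, Mom_zero m v hm hv,
          show m - 1 + 1 = m by omega, hesym,
          show ((m : ℤ) - (m : ℤ)) = 0 by ring, hz_zero, mul_one]
      · intro i hi hne
        have hi' : i < m := Finset.mem_range.mp hi
        have h1 : 1 ≤ m - 1 - i := by omega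
        have h2 : m - 1 - i < m := by omega
        rw [Mom_small m v hv h1 h2, mul_zero]
      · intro h
        exact absurd (Finset.mem_range.mpr (by omega)) h
    · -- k > m
      rw [Mom_rec m v hm (le_of_lt hkm')]
      have step : ∀ i ∈ Finset.range m,
          (-1 : ℝ) ^ i * esym (nodes m v) (i + 1) * Mom m v (k - 1 - i)
          = (-1 : ℝ) ^ (m - 1) * (nodes m v).prod *
              ((-1 : ℝ) ^ i * esym (nodes m v) (i + 1) * hz (nodes m v) ((k : ℤ) - m - 1 - i)) := by
        intro i hi
        have hi' : i < m := Finset.mem_range.mp hi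
        have hk1i : 1 ≤ k - 1 - i := by omega
        have hlt : k - 1 - i < k := by omega
        rw [ih (k - 1 - i) hlt hk1i]
        have : ((k - 1 - i : ℕ) : ℤ) - m = (k : ℤ) - m - 1 - i := by
          push_cast [Nat.cast_sub (show i ≤ k - 1 by omega), Nat.cast_sub (show 1 ≤ k by omega)]
          ring
        rw [this]
        ring
      rw [Finset.sum_congr rfl step, ← Finset.mul_sum]
      congr 1
      -- need : ∑ i ∈ range m, (-1)^i esym (i+1) hz (d-1-i) = hz d  with d = k - m ≥ 1
      set d : ℤ := (k : ℤ) - m with hd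
      have hd1 : 1 ≤ d := by omega
      have hbeta := beta (nodes m v) d hd1
      rw [nodes_length m v] at hbeta
      rw [Finset.sum_range_succ'
        (fun i => (-1 : ℝ) ^ i * esym (nodes m v) i * hz (nodes m v) (d - i))] at hbeta
      push_cast at hbeta
      simp only [pow_zero, esym_zero, one_mul, sub_zero] at hbeta
      have : ∑ i ∈ Finset.range m,
          (-1 : ℝ) ^ i * esym (nodes m v) (i + 1) * hz (nodes m v) (d - 1 - i)
          = - ∑ i ∈ Finset.range m,
              (-1 : ℝ) ^ (i + 1) * esym (nodes m v) (i + 1) * hz (nodes m v) (d - (i + 1)) := by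
        rw [← Finset.sum_neg_distrib]
        apply Finset.sum_congr rfl
        intro i _
        rw [pow_succ]
        have : d - (↑i + 1) = d - 1 - i := by ring
        rw [this]
        ring
      rw [this]
      linarith [hbeta]

end Moments


lemma eval_basis_zero (s : Finset ℕ) (v : ℕ → ℝ) (i : ℕ) :
    Polynomial.eval 0 (Lagrange.basis s v i) = ∏ j ∈ s.erase i, (v j / (v j - v i)) := by
  rw [Lagrange.basis, Polynomial.eval_prod]
  apply Finset.prod_congr rfl
  intro j _
  rw [Lagrange.basisDivisor, Polynomial.eval_mul, Polynomial.eval_C, Polynomial.eval_sub,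
    Polynomial.eval_X, Polynomial.eval_C]
  rw [zero_sub, div_eq_mul_inv, show v j - v i = -(v i - v j) by ring, inv_neg]
  ring

/-- `(n+2)^n ≤ 16^(n+2) * n!` -/
lemma pow_le_factorial : ∀ n : ℕ, ((n : ℝ) + 2) ^ n ≤ 16 ^ (n + 2) * n.factorial := by
  intro n
  induction n with
  | zero => norm_num
  | succ n ih =>
    have hn2 : (0 : ℝ) < (n : ℝ) + 2 := by positivity
    have h2 : (1 + 1 / ((n : ℝ) + 2)) ^ n ≤ 4 := by
      have hle : (1 : ℝ) + 1 / ((n : ℝ) + 2) ≤ Real.exp (1 / ((n : ℝ) + 2)) := by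
        have := Real.add_one_le_exp (1 / ((n : ℝ) + 2))
        linarith
      calc (1 + 1 / ((n : ℝ) + 2)) ^ n ≤ Real.exp (1 / ((n : ℝ) + 2)) ^ n := by
            apply pow_le_pow_left₀ (by positivity) hle
        _ = Real.exp (n / ((n : ℝ) + 2)) := by
            rw [← Real.exp_nat_mul]
            congr 1
            field_simp
        _ ≤ Real.exp 1 := by
            apply Real.exp_le_exp.mpr
            rw [div_le_one hn2]
            linarith
        _ ≤ 4 := by
            have := Real.exp_one_lt_d9
            linarith
    have h1 : ((n : ℝ) + 3) ^ n ≤ 4 * ((n : ℝ) + 2) ^ n := by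
      have heq : ((n : ℝ) + 3) = ((n : ℝ) + 2) * (1 + 1 / ((n : ℝ) + 2)) := by
        field_simp
        ring
      rw [heq, mul_pow]
      have hp : (0 : ℝ) ≤ ((n : ℝ) + 2) ^ n := by positivity
      nlinarith [h2, hp]
    rw [Nat.factorial_succ]
    push_cast
    have e : ((n : ℝ) + 1 + 2) = (n : ℝ) + 3 := by ring
    rw [e]
    have h5 : (0 : ℝ) < (n.factorial : ℝ) := by exact_mod_cast Nat.factorial_pos n
    have h4 : (0 : ℝ) < 16 ^ (n + 2) := by positivity
    calc ((n : ℝ) + 3) ^ (n + 1) = ((n : ℝ) + 3) ^ n * ((n : ℝ) + 3) := by rw [pow_succ]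
      _ ≤ (4 * ((n : ℝ) + 2) ^ n) * ((n : ℝ) + 3) := by
          apply mul_le_mul_of_nonneg_right h1 (by positivity)
      _ ≤ (4 * (16 ^ (n + 2) * n.factorial)) * ((n : ℝ) + 3) := by
          apply mul_le_mul_of_nonneg_right _ (by positivity)
          apply mul_le_mul_of_nonneg_left ih (by norm_num)
      _ ≤ 16 ^ (n + 1 + 2) * (((n : ℝ) + 1) * n.factorial) := by
          have h6 : (16 : ℝ) ^ (n + 1 + 2) = 16 * 16 ^ (n + 2) := by ring
          rw [h6]
          have h7 : (0 : ℝ) ≤ (12 * (n : ℝ) + 4) * (16 ^ (n + 2) * n.factorial) := by positivity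
          nlinarith [h7]

/-- product of distances for equally spaced integers -/
lemma prod_abs_sub_nat {m i : ℕ} (hi : i < m) :
    ∏ j ∈ (Finset.range m).erase i, |(j : ℝ) - (i : ℝ)|
      = (i.factorial : ℝ) * ((m - 1 - i).factorial : ℝ) := by
  have hsplit : (Finset.range m).erase i = Finset.range i ∪ Finset.Ico (i + 1) m := by
    ext j
    simp only [Finset.mem_erase, Finset.mem_range, Finset.mem_union, Finset.mem_Ico]
    omega
  have hdisj : Disjoint (Finset.range i) (Finset.Ico (i + 1) m) := by
    rw [Finset.disjoint_left]
    intro j hj hj'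
    simp only [Finset.mem_range] at hj
    simp only [Finset.mem_Ico] at hj'
    omega
  rw [hsplit, Finset.prod_union hdisj]
  have hleft : ∏ j ∈ Finset.range i, |(j : ℝ) - (i : ℝ)| = (i.factorial : ℝ) := by
    have e1 : ∀ j ∈ Finset.range i, |(j : ℝ) - (i : ℝ)| = ((i - j : ℕ) : ℝ) := by
      intro j hj
      have hj' : j < i := Finset.mem_range.mp hj
      rw [abs_sub_comm, abs_of_nonneg (by
        have : (j : ℝ) ≤ i := by exact_mod_cast hj'.le
        linarith)]
      push_cast [Nat.cast_sub hj'.le]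
      ring
    rw [Finset.prod_congr rfl e1, ← Nat.cast_prod]
    congr 1
    rw [← Finset.prod_range_reflect (fun j => i - j) i]
    have : ∀ j ∈ Finset.range i, i - (i - 1 - j) = j + 1 := by
      intro j hj
      have := Finset.mem_range.mp hj
      omega
    rw [Finset.prod_congr rfl this, Finset.prod_range_add_one_eq_factorial]
  have hright : ∏ j ∈ Finset.Ico (i + 1) m, |(j : ℝ) - (i : ℝ)|
      = (((m - 1 - i).factorial : ℕ) : ℝ) := by
    have e1 : ∀ j ∈ Finset.Ico (i + 1) m, |(j : ℝ) - (i : ℝ)| = ((j - i : ℕ) : ℝ) := by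
      intro j hj
      have hj' : i + 1 ≤ j ∧ j < m := Finset.mem_Ico.mp hj
      rw [abs_of_nonneg (by
        have : (i : ℝ) ≤ j := by exact_mod_cast (by omega : i ≤ j)
        linarith)]
      push_cast [Nat.cast_sub (by omega : i ≤ j)]
      ring
    rw [Finset.prod_congr rfl e1, ← Nat.cast_prod]
    congr 1
    rw [Finset.prod_Ico_eq_prod_range]
    have : ∀ j ∈ Finset.range (m - (i + 1)), i + 1 + j - i = j + 1 := by
      intro j _
      omega
    rw [Finset.prod_congr rfl this, Finset.prod_range_add_one_eq_factorial]
    congr 1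
    omega
  rw [hleft, hright]

end Kahane

open Kahane

/-- Quantitative Kahane lemma: a finitely supported real signed measure on `(a,b)`
(encoded by a finite set `F ⊆ (a,b)` and weights `w`) with total mass `1`,
all positive-order moments less than `δ`, and total variation at most `δ^{-c}`,
where `c > 0` depends only on `a` and `b`. -/
theorem stmt2 (a b : ℝ) (ha : 0 < a) (hab : a < b) (hb : b < 1 / 2) :
    ∃ c : ℝ, 0 < c ∧ ∀ δ : ℝ, 0 < δ → δ < 1 →
      ∃ (F : Finset ℝ) (w : ℝ → ℝ),
        (↑F : Set ℝ) ⊆ Set.Ioo a b ∧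
        (∑ s ∈ F, w s) = 1 ∧
        (∀ k : ℕ, 1 ≤ k → |∑ s ∈ F, w s * s ^ k| < δ) ∧
        (∑ s ∈ F, |w s|) ≤ δ ^ (-c) := by
  classical
  have hba : 0 < b - a := sub_pos.mpr hab
  have hb0 : 0 < b := lt_trans ha hab
  set K : ℝ := 32 * b / (b - a) with hKdef
  have hKgt : 32 < K := by
    rw [hKdef, lt_div_iff₀ hba]
    nlinarith
  have hK1 : 1 < K := by linarith
  have hK0 : 0 < K := by linarith
  have h2b0 : 0 < 2 * b := by linarith
  have h2b1 : 2 * b < 1 := by linarith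
  have hA : 0 < -Real.log (2 * b) := by
    have := Real.log_neg h2b0 h2b1
    linarith
  have hlogK : 0 < Real.log K := Real.log_pos hK1
  set c : ℝ := 3 * Real.log K / (-Real.log (2 * b)) with hcdef
  have hcpos : 0 < c := div_pos (by linarith) hA
  refine ⟨c, hcpos, ?_⟩
  intro δ hδ0 hδ1
  have hex : ∃ n : ℕ, (2 * b) ^ n < δ := exists_pow_lt_of_lt_one hδ0 h2b1
  set m : ℕ := Nat.find hex with hmdef
  have hspec : (2 * b) ^ m < δ := Nat.find_spec hex
  have hm1 : 1 ≤ m := by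
    rcases Nat.eq_zero_or_pos m with h0 | h
    · rw [h0, pow_zero] at hspec; linarith
    · exact h
  have hmin : δ ≤ (2 * b) ^ (m - 1) := not_lt.mp (Nat.find_min hex (by omega))
  set h : ℝ := (b - a) / (m + 1) with hhdef
  have hhpos : 0 < h := by rw [hhdef]; positivity
  set v : ℕ → ℝ := fun i => a + ((i : ℝ) + 1) * h with hvdef
  have hvlt : ∀ i < m, a < v i ∧ v i < b := by
    intro i hi
    constructor
    · have h1 : (0 : ℝ) < ((i : ℝ) + 1) * h := by positivity
      simp only [hvdef]; linarith
    · have hcast : ((i : ℝ) + 1) < (m : ℝ) + 1 := by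
        have : (i : ℝ) < (m : ℝ) := by exact_mod_cast hi
        linarith
      have h2 : ((i : ℝ) + 1) * h < ((m : ℝ) + 1) * h :=
        mul_lt_mul_of_pos_right hcast hhpos
      have hmh : ((m : ℝ) + 1) * h = b - a := by
        rw [hhdef]; field_simp
      simp only [hvdef]; linarith
  have hvinj' : Function.Injective v := by
    intro i j hij
    simp only [hvdef] at hij
    have h1 : ((i : ℝ) + 1) * h = ((j : ℝ) + 1) * h := by linarith
    have h2 : ((i : ℝ) + 1) = ((j : ℝ) + 1) := mul_right_cancel₀ (ne_of_gt hhpos) h1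
    have : (i : ℝ) = (j : ℝ) := by linarith
    exact_mod_cast this
  have hvinj : Set.InjOn v (Finset.range m) := fun x _ y _ hxy => hvinj' hxy
  set F : Finset ℝ := (Finset.range m).image v with hFdef
  set w : ℝ → ℝ := fun x => ∏ y ∈ F.erase x, (y / (y - x)) with hwdef
  have hwv : ∀ i ∈ Finset.range m,
      w (v i) = Polynomial.eval 0 (Lagrange.basis (Finset.range m) v i) := by
    intro i hi
    rw [eval_basis_zero]
    simp only [hwdef, hFdef]
    rw [← Finset.image_erase hvinj']
    rw [Finset.prod_image (fun x _ y _ hxy => hvinj' hxy)]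
  have hsum : ∀ k : ℕ, (∑ s ∈ F, w s * s ^ k) = Mom m v k := by
    intro k
    rw [hFdef, Finset.sum_image (fun x _ y _ hxy => hvinj' hxy), Mom]
    exact Finset.sum_congr rfl (fun i hi => by rw [hwv i hi])
  have hnodesb : ∀ y ∈ nodes m v, 0 ≤ y ∧ y ≤ b := by
    intro y hy
    obtain ⟨i, hi, rfl⟩ := (mem_nodes m v).mp hy
    exact ⟨by linarith [(hvlt i hi).1], le_of_lt (hvlt i hi).2⟩
  refine ⟨F, w, ?_, ?_, ?_, ?_⟩
  · -- support
    intro x hx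
    simp only [hFdef, Finset.coe_image, Set.mem_image, Finset.mem_coe,
      Finset.mem_range] at hx
    obtain ⟨i, hi, rfl⟩ := hx
    exact ⟨(hvlt i hi).1, (hvlt i hi).2⟩
  · -- total mass one
    have h0 : (∑ s ∈ F, w s) = ∑ s ∈ F, w s * s ^ 0 := by
      apply Finset.sum_congr rfl
      intros
      rw [pow_zero, mul_one]
    rw [h0, hsum 0, Mom_zero m v hm1 hvinj]
  · -- moments
    intro k hk1
    rw [hsum k]
    rcases lt_or_ge k m with hkm | hkm
    · rw [Mom_small m v hvinj hk1 hkm, abs_zero]; exact hδ0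
    · have hclosed := Mom_closed m v hm1 hvinj k hk1
      have hcast : ((k : ℤ) - m) = ((k - m : ℕ) : ℤ) := by omega
      rw [hclosed, hcast, hz_coe]
      rw [abs_mul, abs_mul, abs_pow, abs_neg, abs_one, one_pow, one_mul]
      have hpn : 0 ≤ (nodes m v).prod := by
        rw [nodes_prod]
        exact Finset.prod_nonneg (fun i hi =>
          (hnodesb (v i) ((mem_nodes m v).mpr ⟨i, Finset.mem_range.mp hi, rfl⟩)).1)
      have hple : (nodes m v).prod ≤ b ^ m := by
        rw [nodes_prod]
        calc ∏ i ∈ Finset.range m, v i ≤ ∏ _i ∈ Finset.range m, b := by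
              apply Finset.prod_le_prod
              · exact fun i hi =>
                  (hnodesb (v i) ((mem_nodes m v).mpr ⟨i, Finset.mem_range.mp hi, rfl⟩)).1
              · exact fun i hi =>
                  (hnodesb (v i) ((mem_nodes m v).mpr ⟨i, Finset.mem_range.mp hi, rfl⟩)).2
          _ = b ^ m := by rw [Finset.prod_const, Finset.card_range]
      have hsn : 0 ≤ hsym (nodes m v) (k - m) :=
        hsym_nonneg _ (fun y hy => (hnodesb y hy).1) _
      have hsle : hsym (nodes m v) (k - m) ≤ 2 ^ (m + (k - m)) * b ^ (k - m) := by
        have := hsym_le b hb0.le (nodes m v) (fun y hy => hnodesb y hy) (k - m)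
        rwa [nodes_length] at this
      rw [abs_of_nonneg hpn, abs_of_nonneg hsn]
      calc (nodes m v).prod * hsym (nodes m v) (k - m)
          ≤ b ^ m * (2 ^ (m + (k - m)) * b ^ (k - m)) :=
            mul_le_mul hple hsle hsn (by positivity)
        _ = (2 * b) ^ k := by
            rw [show m + (k - m) = k by omega, mul_pow,
              show b ^ m * (2 ^ k * b ^ (k - m)) = 2 ^ k * (b ^ m * b ^ (k - m)) by ring,
              ← pow_add, show m + (k - m) = k by omega]
        _ ≤ (2 * b) ^ m := pow_le_pow_of_le_one h2b0.le h2b1.le hkm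
        _ < δ := hspec
  · -- total variation
    have hTsum : (∑ s ∈ F, |w s|) = ∑ i ∈ Finset.range m, |w (v i)| := by
      rw [hFdef, Finset.sum_image (fun x _ y _ hxy => hvinj' hxy)]
    have ffacpos : (0:ℝ) < ((m-1).factorial : ℝ) := by exact_mod_cast Nat.factorial_pos _
    have hfac : ∀ i ∈ Finset.range m, |w (v i)|
        ≤ (b ^ (m - 1) / h ^ (m - 1)) * (((m - 1).choose i : ℝ) / ((m - 1).factorial : ℝ)) := by
      intro i hi
      have hi' : i < m := Finset.mem_range.mp hi
      have hwi : w (v i) = ∏ j ∈ (Finset.range m).erase i, (v j / (v j - v i)) := by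
        rw [hwv i hi, eval_basis_zero]
      have hcard : ((Finset.range m).erase i).card = m - 1 := by
        rw [Finset.card_erase_of_mem (Finset.mem_range.mpr hi'), Finset.card_range]
      rw [hwi, Finset.abs_prod]
      have e1 : ∀ j ∈ (Finset.range m).erase i,
          |v j / (v j - v i)| = v j / (|(j : ℝ) - (i : ℝ)| * h) := by
        intro j hj
        have hj' : j < m := Finset.mem_range.mp (Finset.mem_erase.mp hj).2
        have hvj0 : 0 ≤ v j := by linarith [(hvlt j hj').1]
        have hdiff : v j - v i = ((j : ℝ) - (i : ℝ)) * h := by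
          simp only [hvdef]; ring
        rw [abs_div, hdiff, abs_mul, abs_of_pos hhpos, abs_of_nonneg hvj0]
      rw [Finset.prod_congr rfl e1, Finset.prod_div_distrib]
      have hnum : ∏ j ∈ (Finset.range m).erase i, v j ≤ b ^ (m - 1) := by
        calc ∏ j ∈ (Finset.range m).erase i, v j
            ≤ ∏ _j ∈ (Finset.range m).erase i, b := by
              apply Finset.prod_le_prod
              · intro j hj
                have hj' : j < m := Finset.mem_range.mp (Finset.mem_erase.mp hj).2
                linarith [(hvlt j hj').1]
              · intro j hj
                have hj' : j < m := Finset.mem_range.mp (Finset.mem_erase.mp hj).2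
                linarith [(hvlt j hj').2]
          _ = b ^ (m - 1) := by rw [Finset.prod_const, hcard]
      have hden : ∏ j ∈ (Finset.range m).erase i, (|(j : ℝ) - (i : ℝ)| * h)
          = ((i.factorial : ℝ) * ((m - 1 - i).factorial : ℝ)) * h ^ (m - 1) := by
        rw [Finset.prod_mul_distrib, prod_abs_sub_nat hi', Finset.prod_const, hcard]
      rw [hden]
      have hfpos : (0:ℝ) < (i.factorial : ℝ) * ((m - 1 - i).factorial : ℝ) := by
        have h1 : (0:ℝ) < (i.factorial : ℝ) := by exact_mod_cast Nat.factorial_pos _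
        have h2 : (0:ℝ) < ((m - 1 - i).factorial : ℝ) := by exact_mod_cast Nat.factorial_pos _
        positivity
      have hdenpos : (0:ℝ) < ((i.factorial : ℝ) * ((m - 1 - i).factorial : ℝ)) * h ^ (m - 1) := by
        positivity
      have hchoose : ((m - 1).choose i : ℝ) * (i.factorial : ℝ) * ((m - 1 - i).factorial : ℝ)
          = ((m - 1).factorial : ℝ) := by
        exact_mod_cast congrArg (fun n : ℕ => (n : ℝ))
          (Nat.choose_mul_factorial_mul_factorial (show i ≤ m - 1 by omega))
      calc (∏ j ∈ (Finset.range m).erase i, v j) /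
              (((i.factorial : ℝ) * ((m - 1 - i).factorial : ℝ)) * h ^ (m - 1))
          ≤ b ^ (m - 1) / (((i.factorial : ℝ) * ((m - 1 - i).factorial : ℝ)) * h ^ (m - 1)) :=
            (div_le_div_iff_of_pos_right hdenpos).mpr hnum
        _ = (b ^ (m - 1) / h ^ (m - 1)) * (((m - 1).choose i : ℝ) / ((m - 1).factorial : ℝ)) := by
            have h1 : ((m - 1).choose i : ℝ) / ((m - 1).factorial : ℝ)
                = 1 / ((i.factorial : ℝ) * ((m - 1 - i).factorial : ℝ)) := by
              rw [div_eq_div_iff (ne_of_gt ffacpos) (ne_of_gt hfpos)]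
              linear_combination hchoose
            rw [h1, div_mul_div_comm, mul_one, mul_comm (h ^ (m - 1)) _]
    have hTbound : (∑ s ∈ F, |w s|)
        ≤ (b ^ (m - 1) / h ^ (m - 1)) * ((2:ℝ) ^ (m - 1) / ((m - 1).factorial : ℝ)) := by
      rw [hTsum]
      calc ∑ i ∈ Finset.range m, |w (v i)|
          ≤ ∑ i ∈ Finset.range m, (b ^ (m - 1) / h ^ (m - 1)) *
              (((m - 1).choose i : ℝ) / ((m - 1).factorial : ℝ)) := Finset.sum_le_sum hfac
        _ = (b ^ (m - 1) / h ^ (m - 1)) * ((2:ℝ) ^ (m - 1) / ((m - 1).factorial : ℝ)) := by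
            rw [← Finset.mul_sum]
            congr 1
            rw [← Finset.sum_div]
            congr 1
            have hcasts : ∑ i ∈ Finset.range m, ((m - 1).choose i : ℝ)
                = ((∑ i ∈ Finset.range m, (m - 1).choose i : ℕ) : ℝ) := by
              push_cast
              rfl
            have h2c : ∑ i ∈ Finset.range m, (m - 1).choose i = 2 ^ (m - 1) := by
              have hh := Nat.sum_range_choose (m - 1)
              rwa [show m - 1 + 1 = m by omega] at hh
            rw [hcasts, h2c]
            push_cast
            ring
    rcases Nat.lt_or_ge m 2 with hm2 | hm2
    · -- m = 1 : the bound is 1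
      have hm1' : m = 1 := by omega
      have : (b ^ (m - 1) / h ^ (m - 1)) * ((2:ℝ) ^ (m - 1) / ((m - 1).factorial : ℝ)) = 1 := by
        rw [hm1']
        norm_num [Nat.factorial]
      rw [this] at hTbound
      calc (∑ s ∈ F, |w s|) ≤ 1 := hTbound
        _ ≤ δ ^ (-c) := Real.one_le_rpow_of_pos_of_le_one_of_nonpos hδ0 hδ1.le
            (neg_nonpos.mpr hcpos.le)
    · -- m ≥ 2
      have hfact : ((m : ℝ) + 1) ^ (m - 1) ≤ 16 ^ (m + 1) * ((m - 1).factorial : ℝ) := by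
        have hpf := pow_le_factorial (m - 1)
        rw [show ((m - 1 : ℕ) : ℝ) + 2 = (m : ℝ) + 1 by
            push_cast [Nat.cast_sub hm1]; ring,
          show (m - 1) + 2 = m + 1 by omega] at hpf
        exact hpf
      have hXP : b ^ (m - 1) * (2:ℝ) ^ (m - 1)
          = ((2 * b / (b - a)) ^ (m - 1)) * (((m : ℝ) + 1) ^ (m - 1)) * h ^ (m - 1) := by
        rw [← mul_pow, ← mul_pow, ← mul_pow]
        congr 1
        rw [hhdef]
        field_simp
      have hT2 : (b ^ (m - 1) / h ^ (m - 1)) * ((2:ℝ) ^ (m - 1) / ((m - 1).factorial : ℝ))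
          ≤ (2 * b / (b - a)) ^ (m - 1) * 16 ^ (m + 1) := by
        rw [div_mul_div_comm, hXP]
        have hid : ((2 * b / (b - a)) ^ (m - 1)) * (((m : ℝ) + 1) ^ (m - 1)) * h ^ (m - 1) /
              (h ^ (m - 1) * ((m - 1).factorial : ℝ))
            = ((2 * b / (b - a)) ^ (m - 1)) *
              ((((m : ℝ) + 1) ^ (m - 1)) / ((m - 1).factorial : ℝ)) := by
          field_simp
        rw [hid]
        apply mul_le_mul_of_nonneg_left _ (pow_nonneg (by positivity) _)
        rw [div_le_iff₀ ffacpos]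
        exact hfact
      have hchain : (2 * b / (b - a)) ^ (m - 1) * (16:ℝ) ^ (m + 1) ≤ K ^ (m + 1) := by
        have hq : 2 * b / (b - a) = K / 16 := by rw [hKdef]; ring
        have hsplit : (K / 16) ^ (m - 1) * (16:ℝ) ^ (m + 1) = K ^ (m - 1) * 256 := by
          rw [div_pow, show m + 1 = (m - 1) + 2 by omega, pow_add]
          field_simp
          ring
        rw [hq, hsplit]
        calc K ^ (m - 1) * 256 ≤ K ^ (m - 1) * K ^ 2 := by
              apply mul_le_mul_of_nonneg_left _ (pow_nonneg hK0.le _)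
              nlinarith
          _ = K ^ (m + 1) := by rw [← pow_add]; congr 1; omega
      have hexp : K ^ (m + 1) ≤ K ^ (3 * (m - 1)) :=
        pow_le_pow_right₀ hK1.le (by omega)
      have hfinal : K ^ (3 * (m - 1)) ≤ δ ^ (-c) := by
        have hlogδ : Real.log δ ≤ ((m - 1 : ℕ) : ℝ) * Real.log (2 * b) := by
          calc Real.log δ ≤ Real.log ((2 * b) ^ (m - 1)) := Real.log_le_log hδ0 hmin
            _ = ((m - 1 : ℕ) : ℝ) * Real.log (2 * b) := Real.log_pow _ _
        have hKexp : (K : ℝ) ^ (3 * (m - 1)) = Real.exp ((3 * (m - 1) : ℕ) * Real.log K) := by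
          rw [← Real.exp_log (pow_pos hK0 (3 * (m - 1))), Real.log_pow]
        have hδexp : δ ^ (-c) = Real.exp (Real.log δ * (-c)) :=
          Real.rpow_def_of_pos hδ0 (-c)
        rw [hKexp, hδexp]
        apply Real.exp_le_exp.mpr
        set n1 : ℝ := ((m - 1 : ℕ) : ℝ) with hn1def
        have hn1 : 0 ≤ n1 := Nat.cast_nonneg _
        have hcA : c * (-Real.log (2 * b)) = 3 * Real.log K := by
          rw [hcdef, div_mul_cancel₀]
          exact ne_of_gt hA
        have h3 : n1 * (-Real.log (2 * b)) ≤ -Real.log δ := by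
          have h4 : -(n1 * Real.log (2 * b)) ≤ -Real.log δ := neg_le_neg hlogδ
          linarith [h4]
        have h5 : c * (n1 * (-Real.log (2 * b))) ≤ c * (-Real.log δ) :=
          mul_le_mul_of_nonneg_left h3 hcpos.le
        have h6 : c * (n1 * (-Real.log (2 * b))) = 3 * n1 * Real.log K := by
          calc c * (n1 * (-Real.log (2 * b))) = n1 * (c * (-Real.log (2 * b))) := by ring
            _ = n1 * (3 * Real.log K) := by rw [hcA]
            _ = 3 * n1 * Real.log K := by ring
        have hcasts : ((3 * (m - 1) : ℕ) : ℝ) = 3 * n1 := by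
          rw [hn1def]; push_cast; ring
        rw [hcasts]
        linarith [h5, h6]
      calc (∑ s ∈ F, |w s|)
          ≤ (b ^ (m - 1) / h ^ (m - 1)) * ((2:ℝ) ^ (m - 1) / ((m - 1).factorial : ℝ)) := hTbound
        _ ≤ (2 * b / (b - a)) ^ (m - 1) * 16 ^ (m + 1) := hT2
        _ ≤ K ^ (m + 1) := hchain
        _ ≤ K ^ (3 * (m - 1)) := hexp
        _ ≤ δ ^ (-c) := hfinal

end
end

section
/- Let ρ be the signed measure supported on equally spaced nodes s_j = a + (j − 1/2)h, h = (b−a)/n, j = 1,...,n, defined by ∫ p dρ = p(0) for all polynomials p of degree ≤ n−1 (so ρ({s_j}) equals the value at 0 of the j-th Lagrange basis polynomial). Then the total variation satisfies ∫|dρ| ≤ (2eb/(b−a))^{n−1}. -/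
open Finset

lemma pow_le_exp_factorial (m : ℕ) :
    ((m + 1 : ℕ) : ℝ) ^ m ≤ Real.exp 1 ^ m * (Nat.factorial m) := by
  induction m with
  | zero => simp
  | succ k ih =>
    have hk : (0:ℝ) < (k:ℝ) + 1 := by positivity
    have h1 : ((k + 2 : ℕ) : ℝ) ≤ Real.exp (1 / ((k:ℝ) + 1)) * ((k:ℝ) + 1) := by
      have hx := Real.add_one_le_exp (1 / ((k:ℝ) + 1))
      calc ((k+2:ℕ):ℝ) = (1/((k:ℝ)+1) + 1) * ((k:ℝ)+1) := by field_simp; push_cast; ring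
        _ ≤ Real.exp (1/((k:ℝ)+1)) * ((k:ℝ)+1) := mul_le_mul_of_nonneg_right hx hk.le
    have h2 : ((k + 2 : ℕ) : ℝ) ^ (k+1) ≤ Real.exp 1 * ((k:ℝ)+1) ^ (k+1) := by
      calc ((k+2:ℕ):ℝ)^(k+1) ≤ (Real.exp (1/((k:ℝ)+1)) * ((k:ℝ)+1))^(k+1) :=
            pow_le_pow_left₀ (by positivity) h1 _
        _ = Real.exp (1/((k:ℝ)+1)) ^ (k+1) * ((k:ℝ)+1)^(k+1) := mul_pow _ _ _
        _ = Real.exp 1 * ((k:ℝ)+1)^(k+1) := by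
            rw [← Real.exp_nat_mul]; congr 2; field_simp; push_cast; ring
    have ih' : ((k:ℝ)+1) ^ k ≤ Real.exp 1 ^ k * (Nat.factorial k) := by
      have := ih; push_cast at this ⊢; exact this
    have hfac : ((Nat.factorial (k+1) : ℕ) : ℝ) = ((k:ℝ)+1) * Nat.factorial k := by
      rw [Nat.factorial_succ]; push_cast; ring
    calc ((k + 1 + 1 : ℕ) : ℝ) ^ (k+1) ≤ Real.exp 1 * ((k:ℝ)+1) ^ (k+1) := by
          convert h2 using 3
      _ = Real.exp 1 * (((k:ℝ)+1) * ((k:ℝ)+1)^k) := by ring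
      _ ≤ Real.exp 1 * (((k:ℝ)+1) * (Real.exp 1 ^ k * Nat.factorial k)) := by
          have he : (0:ℝ) < Real.exp 1 := Real.exp_pos 1
          apply mul_le_mul_of_nonneg_left _ he.le
          exact mul_le_mul_of_nonneg_left ih' hk.le
      _ = Real.exp 1 ^ (k+1) * (Nat.factorial (k+1)) := by rw [hfac]; ring

lemma dist_prod (n j : ℕ) (hj : j < n) :
    ∏ i ∈ (range n).erase j, (if i < j then j - i else i - j) =
      j.factorial * (n - 1 - j).factorial := by
  have hset : (range n).erase j = range j ∪ Ico (j+1) n := by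
    ext x; simp only [mem_erase, mem_range, mem_union, mem_Ico]; omega
  have hdisj : Disjoint (range j) (Ico (j+1) n) := by
    simp only [disjoint_left, mem_range, mem_Ico]; omega
  rw [hset, prod_union hdisj]
  have h1 : ∏ i ∈ range j, (if i < j then j - i else i - j) = j.factorial := by
    rw [← Finset.prod_range_reflect]
    rw [← Finset.prod_range_add_one_eq_factorial]
    apply prod_congr rfl
    intro i hi
    simp only [mem_range] at hi
    have h' : j - 1 - i < j := by omega
    simp only [if_pos h']
    omega
  have h2 : ∏ i ∈ Ico (j+1) n, (if i < j then j - i else i - j) = (n - 1 - j).factorial := by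
    rw [Finset.prod_Ico_eq_prod_range]
    rw [← Finset.prod_range_add_one_eq_factorial]
    have : n - (j+1) = n - 1 - j := by omega
    rw [this]
    apply prod_congr rfl
    intro i hi
    have h' : ¬ (j + 1 + i < j) := by omega
    simp only [if_neg h']
    omega
  rw [h1, h2]

lemma fin_erase_prod {M : Type*} [CommMonoid M] (n : ℕ) (j : Fin n) (g : ℕ → M) :
    ∏ i ∈ Finset.univ.erase j, g i.val = ∏ i ∈ (range n).erase j.val, g i := by
  have hmap : (Finset.univ.erase j).map Fin.valEmbedding = (range n).erase j.val := by
    ext k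
    simp only [Finset.mem_map, mem_erase, Finset.mem_univ, and_true, mem_range,
      Fin.valEmbedding_apply]
    constructor
    · rintro ⟨i, hij, rfl⟩
      exact ⟨fun hc => hij (Fin.ext hc), i.isLt⟩
    · rintro ⟨hkj, hk⟩
      exact ⟨⟨k, hk⟩, fun hc => hkj (congrArg Fin.val hc), rfl⟩
  rw [← hmap, Finset.prod_map]
  rfl

/-- Total variation bound for the interpolation functional with equally spaced nodes
`s_j = a + (j - 1/2)h`, `h = (b-a)/n`: the masses are
`ρ({s_j}) = (-1)^{n-1} ∏_{i≠j} s_i/(s_j - s_i)` and their absolute values sum to at most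
`(2eb/(b-a))^{n-1}`. -/
theorem stmt4 (n : ℕ) (hn : 0 < n) (a b : ℝ) (ha : 0 < a) (hab : a < b)
    (h : ℝ) (hh : h = (b - a) / n)
    (s : Fin n → ℝ) (hsdef : ∀ j, s j = a + ((j : ℝ) + 1 / 2) * h)
    (w : Fin n → ℝ)
    (hwdef : ∀ j, w j =
      (-1 : ℝ) ^ (n - 1) * ∏ i ∈ Finset.univ.erase j, s i / (s j - s i)) :
    ∑ j, |w j| ≤ (2 * Real.exp 1 * b / (b - a)) ^ (n - 1) := by
  obtain ⟨m, rfl⟩ : ∃ m, n = m + 1 := ⟨n - 1, by omega⟩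
  simp only [Nat.add_sub_cancel] at hwdef ⊢
  have hnpos : (0:ℝ) < (m:ℝ) + 1 := by positivity
  have hh0 : 0 < h := by
    rw [hh]; apply div_pos (by linarith); push_cast; positivity
  have hb0 : 0 < b := lt_trans ha hab
  have hba : b - a = ((m:ℝ) + 1) * h := by
    rw [hh]; push_cast; field_simp
  have hs_pos : ∀ i : Fin (m+1), 0 < s i := by
    intro i; rw [hsdef]
    have : (0:ℝ) ≤ (i:ℝ) := Nat.cast_nonneg _
    nlinarith
  have hs_le : ∀ i : Fin (m+1), s i ≤ b := by
    intro i; rw [hsdef]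
    have hi : (i:ℝ) ≤ (m:ℝ) := by exact_mod_cast Nat.lt_succ_iff.mp i.isLt
    nlinarith
  -- distances
  set d : Fin (m+1) → Fin (m+1) → ℕ :=
    fun j i => if i.val < j.val then j.val - i.val else i.val - j.val with hd
  have habs : ∀ j i : Fin (m+1), |s j - s i| = (d j i : ℝ) * h := by
    intro j i
    rw [hsdef, hsdef]
    have e1 : a + ((j:ℝ)+1/2)*h - (a + ((i:ℝ)+1/2)*h) = ((j:ℝ) - (i:ℝ)) * h := by ring
    rw [e1, abs_mul, abs_of_pos hh0]
    congr 1
    rcases lt_or_ge i.val j.val with hlt | hge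
    · have : (d j i : ℝ) = (j:ℝ) - (i:ℝ) := by
        simp only [hd, if_pos hlt]
        push_cast [Nat.cast_sub hlt.le]; ring
      rw [this, abs_of_pos]
      have : (i:ℝ) < (j:ℝ) := by exact_mod_cast hlt
      linarith
    · have : (d j i : ℝ) = (i:ℝ) - (j:ℝ) := by
        simp only [hd, if_neg (by omega : ¬ i.val < j.val)]
        push_cast [Nat.cast_sub hge]; ring
      rw [this, abs_sub_comm, abs_of_nonneg]
      have : (j:ℝ) ≤ (i:ℝ) := by exact_mod_cast hge
      linarith
  have hdpos : ∀ j i : Fin (m+1), i ≠ j → 0 < d j i := by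
    intro j i hij
    simp only [hd]
    have : i.val ≠ j.val := fun hc => hij (Fin.ext hc)
    split <;> omega
  have hcard : ∀ j : Fin (m+1), (Finset.univ.erase j).card = m := by
    intro j
    rw [Finset.card_erase_of_mem (Finset.mem_univ j), Finset.card_univ]
    simp
  -- product of distances
  have hD : ∀ j : Fin (m+1),
      (∏ i ∈ Finset.univ.erase j, (d j i : ℝ)) =
        ((j.val.factorial * (m - j.val).factorial : ℕ) : ℝ) := by
    intro j
    have : ∏ i ∈ Finset.univ.erase j, d j i
        = j.val.factorial * (m - j.val).factorial := by
      have e1 : ∏ i ∈ Finset.univ.erase j, d j i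
          = ∏ i ∈ (range (m+1)).erase j.val,
              (if i < j.val then j.val - i else i - j.val) := by
        rw [← fin_erase_prod (m+1) j (fun k => if k < j.val then j.val - k else k - j.val)]
      rw [e1, dist_prod (m+1) j.val j.isLt]
      simp
    rw [← this]
    push_cast
    rfl
  -- per-j bound
  have hw : ∀ j : Fin (m+1),
      |w j| ≤ (b/h)^m * ((m.choose j.val : ℝ) / m.factorial) := by
    intro j
    have hj : j.val ≤ m := Nat.lt_succ_iff.mp j.isLt
    have step1 : |w j| = ∏ i ∈ Finset.univ.erase j, (s i / |s j - s i|) := by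
      rw [hwdef, abs_mul, abs_pow, abs_neg, abs_one, one_pow, one_mul, Finset.abs_prod]
      apply prod_congr rfl
      intro i _
      rw [abs_div, abs_of_pos (hs_pos i)]
    have step2 : ∏ i ∈ Finset.univ.erase j, (s i / |s j - s i|)
        ≤ ∏ i ∈ Finset.univ.erase j, (b / ((d j i : ℝ) * h)) := by
      apply Finset.prod_le_prod
      · intro i _; exact div_nonneg (hs_pos i).le (abs_nonneg _)
      · intro i hi
        have hij : i ≠ j := (Finset.mem_erase.mp hi).1
        rw [habs j i]
        have hdh : (0:ℝ) < (d j i : ℝ) * h := by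
          have := hdpos j i hij
          have : (0:ℝ) < (d j i : ℝ) := by exact_mod_cast this
          positivity
        exact div_le_div_of_nonneg_right (hs_le i) hdh.le
    have step3 : ∏ i ∈ Finset.univ.erase j, (b / ((d j i : ℝ) * h))
        = (b/h)^m * ((m.choose j.val : ℝ) / m.factorial) := by
      rw [Finset.prod_div_distrib, Finset.prod_const, hcard]
      rw [Finset.prod_mul_distrib, Finset.prod_const, hcard, hD]
      have hfac := Nat.choose_mul_factorial_mul_factorial hj
      have hfacR : ((m.choose j.val : ℝ)) * (j.val.factorial) * ((m - j.val).factorial)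
          = (m.factorial : ℝ) := by exact_mod_cast hfac
      have hjf : (0:ℝ) < (j.val.factorial : ℝ) := by exact_mod_cast j.val.factorial_pos
      have hmjf : (0:ℝ) < ((m - j.val).factorial : ℝ) := by
        exact_mod_cast (m - j.val).factorial_pos
      have hmf : (0:ℝ) < (m.factorial : ℝ) := by exact_mod_cast m.factorial_pos
      push_cast
      rw [div_pow]
      field_simp
      linear_combination (-1) * hfacR
    calc |w j| = _ := step1
      _ ≤ _ := step2
      _ = _ := step3
  -- sum up
  have hsum : ∑ j : Fin (m+1), ((m.choose j.val : ℝ)) = 2^m := by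
    rw [Fin.sum_univ_eq_sum_range (fun k => ((m.choose k : ℝ)))]
    rw [← Nat.cast_sum]
    rw [Nat.sum_range_choose]
    push_cast; ring
  have total : ∑ j, |w j| ≤ (b/h)^m * (2^m / m.factorial) := by
    calc ∑ j, |w j| ≤ ∑ j : Fin (m+1), (b/h)^m * ((m.choose j.val : ℝ) / m.factorial) :=
          Finset.sum_le_sum (fun j _ => hw j)
      _ = (b/h)^m * (2^m / m.factorial) := by
          rw [← Finset.mul_sum, ← Finset.sum_div, hsum]
  -- final inequality
  have key : (1:ℝ)/m.factorial ≤ (Real.exp 1 / ((m:ℝ)+1))^m := by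
    rw [div_pow, div_le_div_iff₀ (by positivity) (by positivity), one_mul]
    have := pow_le_exp_factorial m
    push_cast at this
    linarith
  have hmf : (0:ℝ) < (m.factorial : ℝ) := by exact_mod_cast m.factorial_pos
  calc ∑ j, |w j| ≤ (b/h)^m * (2^m / m.factorial) := total
    _ = (2*b/h)^m * (1/m.factorial) := by
        rw [div_pow, div_pow, mul_pow]; ring
    _ ≤ (2*b/h)^m * (Real.exp 1 / ((m:ℝ)+1))^m := by
        apply mul_le_mul_of_nonneg_left key (by positivity)
    _ = (2 * Real.exp 1 * b / (b - a))^m := by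
        rw [hba, ← mul_pow]
        congr 1
        field_simp
end

section
/- Let X_1, ..., X_N be random variables on a probability space with −1 ≤ X_j ≤ 1, all having the same expectation E(X_j) = μ > 0, and suppose there is 0 < ε < 1 such that for every non-empty subset A of {1,...,N}, (1−ε)·μ^{|A|} ≤ E(∏_{j∈A} X_j) ≤ (1+ε)·μ^{|A|}. Let X = (1/N)∑_{j=1}^N X_j. Then for any α > 0, P(X < μ − α) ≤ exp(−α²N/8) + ε·exp(N/4). -/
open MeasureTheory

lemma exp_le_quad {x : ℝ} (h : |x| ≤ 1) : Real.exp x ≤ 1 + x + x ^ 2 := by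
  have h3 := Real.exp_bound h (n := 3) (by norm_num)
  have h4 : (∑ m ∈ Finset.range 3, x ^ m / m.factorial) = 1 + x + x ^ 2 / 2 := by
    simp [Finset.sum_range_succ, Nat.factorial]
  rw [h4] at h3
  norm_num [Nat.factorial] at h3
  have h5 : |x| ^ 3 ≤ x ^ 2 := by
    have := pow_le_pow_of_le_one (abs_nonneg x) h (by norm_num : 2 ≤ 3)
    simpa [sq_abs] using this
  have h6 := (abs_sub_le_iff.1 h3).1
  nlinarith [sq_nonneg x]

lemma sum_powerset_pow (N : ℕ) (a b : ℝ) :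
    ∑ A ∈ (Finset.univ : Finset (Fin N)).powerset, a ^ A.card * b ^ (N - A.card)
      = (a + b) ^ N := by
  have h := Finset.prod_add (fun _ : Fin N => a) (fun _ => b) Finset.univ
  rw [Finset.prod_const, Finset.card_univ, Fintype.card_fin] at h
  rw [h]
  refine Finset.sum_congr rfl fun A hA => ?_
  rw [Finset.prod_const, Finset.prod_const,
    Finset.card_sdiff_of_subset (Finset.mem_powerset.mp hA), Finset.card_univ, Fintype.card_fin]

set_option maxHeartbeats 1000000 in
/-- Bernstein-type exponential estimate for almost multiplicative systems of bounded
random variables: `P(X < μ - α) ≤ exp(-α²N/8) + ε·exp(N/4)` where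
`X = (1/N) ∑ X_j`. -/
theorem stmt5 {Ω : Type*} [MeasureSpace Ω] [IsProbabilityMeasure (volume : Measure Ω)]
    (N : ℕ) (hN : 0 < N) (X : Fin N → Ω → ℝ) (hmeas : ∀ j, Measurable (X j))
    (hbdd : ∀ j ω, -1 ≤ X j ω ∧ X j ω ≤ 1)
    (μ : ℝ) (hμ : 0 < μ) (hexp : ∀ j, (∫ ω, X j ω) = μ)
    (ε : ℝ) (hε : 0 < ε) (hε1 : ε < 1)
    (hmult : ∀ A : Finset (Fin N), A.Nonempty →
      (1 - ε) * μ ^ A.card ≤ (∫ ω, ∏ j ∈ A, X j ω) ∧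
      (∫ ω, ∏ j ∈ A, X j ω) ≤ (1 + ε) * μ ^ A.card)
    (α : ℝ) (hα : 0 < α) :
    (volume {ω | (1 / N : ℝ) * ∑ j, X j ω < μ - α}).toReal
      ≤ Real.exp (-(α ^ 2) * N / 8) + ε * Real.exp (N / 4) := by
  have hNR : (0:ℝ) < N := by exact_mod_cast hN
  -- each X j is integrable
  have hXint : ∀ j, Integrable (X j) := by
    intro j
    refine (integrable_const (1:ℝ)).mono' (hmeas j).aestronglyMeasurable ?_
    filter_upwards with ω
    rw [Real.norm_eq_abs]
    exact abs_le.mpr ⟨(hbdd j ω).1, (hbdd j ω).2⟩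
  have hμ1 : μ ≤ 1 := by
    calc μ = ∫ ω, X ⟨0, hN⟩ ω := (hexp _).symm
    _ ≤ ∫ (_ : Ω), (1:ℝ) :=
      integral_mono (hXint _) (integrable_const 1) (fun ω => (hbdd _ ω).2)
    _ = 1 := by simp
  have hprodint : ∀ A : Finset (Fin N), Integrable fun ω => ∏ j ∈ A, X j ω := by
    intro A
    refine (integrable_const (1:ℝ)).mono'
      (A.measurable_prod fun j _ => hmeas j).aestronglyMeasurable ?_
    filter_upwards with ω
    rw [Real.norm_eq_abs, Finset.abs_prod]
    exact Finset.prod_le_one (fun j _ => abs_nonneg _)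
      (fun j _ => abs_le.mpr ⟨(hbdd j ω).1, (hbdd j ω).2⟩)
  have havg : ∀ ω, (-1 : ℝ) ≤ (1 / N : ℝ) * ∑ j, X j ω := by
    intro ω
    have h1 : (-(N:ℝ)) ≤ ∑ j, X j ω := by
      calc (-(N:ℝ)) = ∑ _j : Fin N, (-1 : ℝ) := by simp
      _ ≤ _ := Finset.sum_le_sum fun j _ => (hbdd j ω).1
    rw [one_div, inv_mul_eq_div, le_div_iff₀ hNR]
    nlinarith
  by_cases hcase : 2 ≤ α
  · have hempty : {ω | (1 / N : ℝ) * ∑ j, X j ω < μ - α} = ∅ := by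
      ext ω
      simp only [Set.mem_setOf_eq, Set.mem_empty_iff_false, iff_false, not_lt]
      have := havg ω; linarith
    rw [hempty]
    simp only [measure_empty, ENNReal.toReal_zero]
    positivity
  push_neg at hcase
  set t : ℝ := 3 * α / 20 with ht_def
  have ht0 : 0 < t := by positivity
  have ht1 : t ≤ 1 := by rw [ht_def]; linarith
  set S : Ω → ℝ := fun ω => ∑ j, X j ω with hS_def
  have hSmeas : Measurable S := Finset.measurable_sum _ fun j _ => hmeas j
  have hSlb : ∀ ω, -(N:ℝ) ≤ S ω := by
    intro ω
    calc (-(N:ℝ)) = ∑ _j : Fin N, (-1 : ℝ) := by simp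
    _ ≤ _ := Finset.sum_le_sum fun j _ => (hbdd j ω).1
  have hfmeas : Measurable fun ω => Real.exp (-t * S ω) := (hSmeas.const_mul (-t)).exp
  have hfint : Integrable fun ω => Real.exp (-t * S ω) := by
    refine (integrable_const (Real.exp (t * N))).mono' hfmeas.aestronglyMeasurable ?_
    filter_upwards with ω
    rw [Real.norm_eq_abs, abs_of_nonneg (Real.exp_pos _).le]
    apply Real.exp_le_exp.mpr
    nlinarith [hSlb ω]
  -- Markov / Chernoff step
  have hmarkov : (volume {ω | (1 / N : ℝ) * ∑ j, X j ω < μ - α}).toReal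
      ≤ Real.exp (t * (N * (μ - α))) * ∫ ω, Real.exp (-t * S ω) := by
    have hsub : {ω | (1 / N : ℝ) * ∑ j, X j ω < μ - α}
        ⊆ {ω | Real.exp (-t * (N * (μ - α))) ≤ Real.exp (-t * S ω)} := by
      intro ω hω
      simp only [Set.mem_setOf_eq] at hω ⊢
      apply Real.exp_le_exp.mpr
      have hlt : S ω < N * (μ - α) := by
        rw [one_div, inv_mul_eq_div, div_lt_iff₀ hNR] at hω
        rw [hS_def]; nlinarith
      nlinarith
    have h2 := mul_meas_ge_le_integral_of_nonneg
      (Filter.Eventually.of_forall fun ω => (Real.exp_pos (-t * S ω)).le) hfint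
      (Real.exp (-t * (N * (μ - α))))
    have h3 : (volume {ω | (1 / N:ℝ) * ∑ j, X j ω < μ - α}).toReal
        ≤ (volume {ω | Real.exp (-t * (N * (μ - α))) ≤ Real.exp (-t * S ω)}).toReal :=
      ENNReal.toReal_mono (measure_ne_top _ _) (measure_mono hsub)
    have h4 := mul_le_mul_of_nonneg_left h2 (Real.exp_pos (t * (N * (μ - α)))).le
    rw [← mul_assoc, ← Real.exp_add] at h4
    have h5 : t * (N * (μ - α)) + -t * (N * (μ - α)) = 0 := by ring
    rw [h5, Real.exp_zero, one_mul] at h4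
    exact h3.trans h4
  -- pointwise quadratic bound
  have hpt : ∀ ω, Real.exp (-t * S ω) ≤ ∏ j, (1 + t ^ 2 + -t * X j ω) := by
    intro ω
    have hs : Real.exp (-t * S ω) = ∏ j, Real.exp (-t * X j ω) := by
      rw [← Real.exp_sum, ← Finset.mul_sum]
    rw [hs]
    refine Finset.prod_le_prod (fun j _ => (Real.exp_pos _).le) fun j _ => ?_
    have hXb : |X j ω| ≤ 1 := abs_le.mpr ⟨(hbdd j ω).1, (hbdd j ω).2⟩
    have habs : |(-t * X j ω)| ≤ 1 := by
      rw [abs_mul, abs_neg, abs_of_pos ht0]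
      nlinarith [mul_le_mul_of_nonneg_left hXb ht0.le]
    have hq := exp_le_quad habs
    have hx2 : (-t * X j ω) ^ 2 ≤ t ^ 2 := by
      have h1 : (X j ω) ^ 2 ≤ 1 := by nlinarith [(hbdd j ω).1, (hbdd j ω).2]
      nlinarith [sq_nonneg t]
    nlinarith
  have hgint : Integrable fun ω => ∏ j, (1 + t ^ 2 + -t * X j ω) := by
    refine (integrable_const ((1 + t ^ 2 + t) ^ N)).mono' ?_ ?_
    · exact (Finset.measurable_prod _ fun j _ =>
        ((hmeas j).const_mul (-t)).const_add (1 + t ^ 2)).aestronglyMeasurable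
    · filter_upwards with ω
      rw [Real.norm_eq_abs, Finset.abs_prod]
      calc ∏ j, |1 + t ^ 2 + -t * X j ω| ≤ ∏ _j : Fin N, (1 + t ^ 2 + t) := by
            refine Finset.prod_le_prod (fun j _ => abs_nonneg _) fun j _ => ?_
            rw [abs_le]
            constructor <;> nlinarith [(hbdd j ω).1, (hbdd j ω).2]
      _ = (1 + t ^ 2 + t) ^ N := by rw [Finset.prod_const, Finset.card_univ, Fintype.card_fin]
  have hIg : (∫ ω, Real.exp (-t * S ω)) ≤ ∫ ω, ∏ j, (1 + t ^ 2 + -t * X j ω) :=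
    integral_mono hfint hgint hpt
  -- expansion over subsets
  have hexpand : (∫ ω, ∏ j, (1 + t ^ 2 + -t * X j ω))
      = ∑ A ∈ (Finset.univ : Finset (Fin N)).powerset,
          ((-t) ^ A.card * (1 + t ^ 2) ^ (N - A.card)) * ∫ ω, ∏ j ∈ A, X j ω := by
    have hpt2 : ∀ ω, (∏ j, (1 + t ^ 2 + -t * X j ω))
        = ∑ A ∈ (Finset.univ : Finset (Fin N)).powerset,
            ((-t) ^ A.card * (1 + t ^ 2) ^ (N - A.card)) * ∏ j ∈ A, X j ω := by
      intro ω
      calc ∏ j, (1 + t ^ 2 + -t * X j ω) = ∏ j, (-t * X j ω + (1 + t ^ 2)) :=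
            Finset.prod_congr rfl fun j _ => by ring
      _ = ∑ A ∈ Finset.univ.powerset,
            (∏ j ∈ A, (-t * X j ω)) * ∏ _j ∈ Finset.univ \ A, (1 + t ^ 2) :=
            Finset.prod_add _ _ _
      _ = _ := by
            refine Finset.sum_congr rfl fun A hA => ?_
            rw [Finset.prod_const, Finset.card_sdiff_of_subset (Finset.mem_powerset.mp hA),
              Finset.card_univ, Fintype.card_fin, Finset.prod_mul_distrib, Finset.prod_const]
            ring
    rw [integral_congr_ae (Filter.Eventually.of_forall hpt2),
      integral_finset_sum _ (fun A _ => ((hprodint A).const_mul _))]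
    exact Finset.sum_congr rfl fun A _ => integral_const_mul _ _
  -- deviation bound for each subset
  have hdev : ∀ A ∈ (Finset.univ : Finset (Fin N)).powerset,
      |(∫ ω, ∏ j ∈ A, X j ω) - μ ^ A.card| ≤ ε * μ ^ A.card := by
    intro A _
    rcases A.eq_empty_or_nonempty with rfl | hne
    · simp only [Finset.prod_empty, Finset.card_empty, pow_zero, integral_const,
        measure_univ, probReal_univ, ENNReal.toReal_one, smul_eq_mul, mul_one, sub_self, abs_zero]
      linarith
    · have h := hmult A hne
      have hμA : (0:ℝ) ≤ μ ^ A.card := by positivity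
      rw [abs_le]
      constructor <;> nlinarith [h.1, h.2]
  -- main estimate on the expanded sum
  have hmain : (∑ A ∈ (Finset.univ : Finset (Fin N)).powerset,
        ((-t) ^ A.card * (1 + t ^ 2) ^ (N - A.card)) * ∫ ω, ∏ j ∈ A, X j ω)
      ≤ (1 + t ^ 2 - t * μ) ^ N + ε * (1 + t ^ 2 + t * μ) ^ N := by
    have h2 : (∑ A ∈ (Finset.univ : Finset (Fin N)).powerset,
        ((-t) ^ A.card * (1 + t ^ 2) ^ (N - A.card)) * μ ^ A.card)
        = (1 + t ^ 2 - t * μ) ^ N := by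
      have h := sum_powerset_pow N (-t * μ) (1 + t ^ 2)
      calc (∑ A ∈ (Finset.univ : Finset (Fin N)).powerset,
            ((-t) ^ A.card * (1 + t ^ 2) ^ (N - A.card)) * μ ^ A.card)
          = ∑ A ∈ (Finset.univ : Finset (Fin N)).powerset,
            (-t * μ) ^ A.card * (1 + t ^ 2) ^ (N - A.card) := by
            refine Finset.sum_congr rfl fun A _ => ?_
            rw [mul_pow]; ring
      _ = (-t * μ + (1 + t ^ 2)) ^ N := h
      _ = (1 + t ^ 2 - t * μ) ^ N := by ring_nf
    have h3 : (∑ A ∈ (Finset.univ : Finset (Fin N)).powerset,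
        ((-t) ^ A.card * (1 + t ^ 2) ^ (N - A.card)) *
          ((∫ ω, ∏ j ∈ A, X j ω) - μ ^ A.card))
        ≤ ε * (1 + t ^ 2 + t * μ) ^ N := by
      have ht2 : (0:ℝ) < 1 + t ^ 2 := by positivity
      calc (∑ A ∈ (Finset.univ : Finset (Fin N)).powerset,
            ((-t) ^ A.card * (1 + t ^ 2) ^ (N - A.card)) *
              ((∫ ω, ∏ j ∈ A, X j ω) - μ ^ A.card))
          ≤ ∑ A ∈ (Finset.univ : Finset (Fin N)).powerset,
            (t ^ A.card * (1 + t ^ 2) ^ (N - A.card)) * (ε * μ ^ A.card) := by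
            refine Finset.sum_le_sum fun A hA => ?_
            calc ((-t) ^ A.card * (1 + t ^ 2) ^ (N - A.card)) *
                  ((∫ ω, ∏ j ∈ A, X j ω) - μ ^ A.card)
                ≤ |((-t) ^ A.card * (1 + t ^ 2) ^ (N - A.card)) *
                  ((∫ ω, ∏ j ∈ A, X j ω) - μ ^ A.card)| := le_abs_self _
            _ = (t ^ A.card * (1 + t ^ 2) ^ (N - A.card)) *
                  |(∫ ω, ∏ j ∈ A, X j ω) - μ ^ A.card| := by
                rw [abs_mul, abs_mul, abs_pow, abs_pow, abs_neg, abs_of_pos ht0,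
                  abs_of_pos ht2]
            _ ≤ (t ^ A.card * (1 + t ^ 2) ^ (N - A.card)) * (ε * μ ^ A.card) := by
                refine mul_le_mul_of_nonneg_left (hdev A hA) (by positivity)
      _ = ε * ∑ A ∈ (Finset.univ : Finset (Fin N)).powerset,
            (t * μ) ^ A.card * (1 + t ^ 2) ^ (N - A.card) := by
            rw [Finset.mul_sum]
            refine Finset.sum_congr rfl fun A _ => ?_
            rw [mul_pow]; ring
      _ = ε * (t * μ + (1 + t ^ 2)) ^ N := by rw [sum_powerset_pow]
      _ = ε * (1 + t ^ 2 + t * μ) ^ N := by ring_nf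
    calc (∑ A ∈ (Finset.univ : Finset (Fin N)).powerset,
          ((-t) ^ A.card * (1 + t ^ 2) ^ (N - A.card)) * ∫ ω, ∏ j ∈ A, X j ω)
        = (∑ A ∈ (Finset.univ : Finset (Fin N)).powerset,
          ((-t) ^ A.card * (1 + t ^ 2) ^ (N - A.card)) * μ ^ A.card)
          + ∑ A ∈ (Finset.univ : Finset (Fin N)).powerset,
          ((-t) ^ A.card * (1 + t ^ 2) ^ (N - A.card)) *
            ((∫ ω, ∏ j ∈ A, X j ω) - μ ^ A.card) := by
          rw [← Finset.sum_add_distrib]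
          exact Finset.sum_congr rfl fun A _ => by ring
    _ ≤ (1 + t ^ 2 - t * μ) ^ N + ε * (1 + t ^ 2 + t * μ) ^ N := by
          rw [h2]; linarith
  -- exponential comparisons
  have htμ : t * μ ≤ 1 := by nlinarith
  have e1 : (1 + t ^ 2 - t * μ) ^ N ≤ Real.exp ((t ^ 2 - t * μ) * N) := by
    have h0 : (0:ℝ) ≤ 1 + (t ^ 2 - t * μ) := by nlinarith
    calc (1 + t ^ 2 - t * μ) ^ N = (1 + (t ^ 2 - t * μ)) ^ N := by ring_nf
    _ ≤ (Real.exp (t ^ 2 - t * μ)) ^ N :=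
        pow_le_pow_left₀ h0 (by linarith [Real.add_one_le_exp (t ^ 2 - t * μ)]) N
    _ = Real.exp ((t ^ 2 - t * μ) * N) := by
        rw [← Real.exp_nat_mul]; ring_nf
  have e2 : (1 + t ^ 2 + t * μ) ^ N ≤ Real.exp ((t ^ 2 + t * μ) * N) := by
    have h0 : (0:ℝ) ≤ 1 + (t ^ 2 + t * μ) := by positivity
    calc (1 + t ^ 2 + t * μ) ^ N = (1 + (t ^ 2 + t * μ)) ^ N := by ring_nf
    _ ≤ (Real.exp (t ^ 2 + t * μ)) ^ N :=
        pow_le_pow_left₀ h0 (by linarith [Real.add_one_le_exp (t ^ 2 + t * μ)]) N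
    _ = Real.exp ((t ^ 2 + t * μ) * N) := by
        rw [← Real.exp_nat_mul]; ring_nf
  -- combine everything
  have hcomb : (volume {ω | (1 / N : ℝ) * ∑ j, X j ω < μ - α}).toReal
      ≤ Real.exp (t * (N * (μ - α)) + (t ^ 2 - t * μ) * N)
        + ε * Real.exp (t * (N * (μ - α)) + (t ^ 2 + t * μ) * N) := by
    have hInt : (∫ ω, Real.exp (-t * S ω))
        ≤ (1 + t ^ 2 - t * μ) ^ N + ε * (1 + t ^ 2 + t * μ) ^ N := by
      rw [hexpand] at hIg
      exact hIg.trans hmain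
    have hstep := hmarkov.trans
      (mul_le_mul_of_nonneg_left hInt (Real.exp_pos (t * (N * (μ - α)))).le)
    refine hstep.trans ?_
    rw [mul_add, Real.exp_add, Real.exp_add]
    have hswap : Real.exp (t * (N * (μ - α))) * (ε * (1 + t ^ 2 + t * μ) ^ N)
        = ε * (Real.exp (t * (N * (μ - α))) * (1 + t ^ 2 + t * μ) ^ N) := by ring
    rw [hswap]
    have hA := mul_le_mul_of_nonneg_left e1 (Real.exp_pos (t * (N * (μ - α)))).le
    have hB := mul_le_mul_of_nonneg_left
      (mul_le_mul_of_nonneg_left e2 (Real.exp_pos (t * (N * (μ - α)))).le) hε.le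
    linarith
  have hexp1 : t * (N * (μ - α)) + (t ^ 2 - t * μ) * N ≤ -(α ^ 2) * N / 8 := by
    have h : t * (μ - α) + (t ^ 2 - t * μ) ≤ -(α ^ 2) / 8 := by
      rw [ht_def]; nlinarith [sq_nonneg α]
    calc t * (N * (μ - α)) + (t ^ 2 - t * μ) * N
        = (t * (μ - α) + (t ^ 2 - t * μ)) * N := by ring
    _ ≤ (-(α ^ 2) / 8) * N := mul_le_mul_of_nonneg_right h hNR.le
    _ = -(α ^ 2) * N / 8 := by ring
  have hexp2 : t * (N * (μ - α)) + (t ^ 2 + t * μ) * N ≤ N / 4 := by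
    have h : t * (μ - α) + (t ^ 2 + t * μ) ≤ 1 / 4 := by
      rw [ht_def]
      nlinarith [sq_nonneg (51 * α - 60 * μ), sq_nonneg (1 - μ), mul_pos hμ hμ]
    calc t * ((N:ℝ) * (μ - α)) + (t ^ 2 + t * μ) * (N:ℝ)
        = (t * (μ - α) + (t ^ 2 + t * μ)) * (N:ℝ) := by ring
    _ ≤ (1 / 4) * (N:ℝ) := mul_le_mul_of_nonneg_right h hNR.le
    _ = (N:ℝ) / 4 := by ring
  refine hcomb.trans ?_
  have h1 := Real.exp_le_exp.mpr hexp1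
  have h2 := mul_le_mul_of_nonneg_left (Real.exp_le_exp.mpr hexp2) hε.le
  linarith
end

section
/- For every q > 2 and every γ > 0 there exists a real trigonometric polynomial φ such that: the mean of φ over T is zero, sup|φ| ≤ 1, the L² norm of φ (with respect to normalized Lebesgue measure) equals 1/2, and the ℓ^q norm of its Fourier coefficients is less than γ. -/
open Finset Real

noncomputable def EF : ℕ → (ℕ → ℝ) × (ℕ → ℝ)
  | 0 => (fun _ => 1, fun _ => 1)
  | (k+1) => ((fun n => if n < 2^k then (EF k).1 n else (EF k).2 (n - 2^k)),
              (fun n => if n < 2^k then (EF k).1 n else -((EF k).2 (n - 2^k))))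

lemma abs_EF (k : ℕ) (n : ℕ) : |(EF k).1 n| = 1 ∧ |(EF k).2 n| = 1 := by
  induction k generalizing n with
  | zero => simp [EF]
  | succ k ih =>
    simp only [EF]
    constructor <;> split <;> simp [ih]

noncomputable def Psh (k : ℕ) (t : ℝ) : ℂ :=
  ∑ n ∈ range (2^k), ((EF k).1 n : ℂ) * Complex.exp (n * Complex.I * t)

noncomputable def Qsh (k : ℕ) (t : ℝ) : ℂ :=
  ∑ n ∈ range (2^k), ((EF k).2 n : ℂ) * Complex.exp (n * Complex.I * t)

lemma Psh_succ (k : ℕ) (t : ℝ) :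
    Psh (k+1) t = Psh k t + Complex.exp ((2^k : ℕ) * Complex.I * t) * Qsh k t ∧
    Qsh (k+1) t = Psh k t - Complex.exp ((2^k : ℕ) * Complex.I * t) * Qsh k t := by
  have h2 : (2:ℕ)^(k+1) = 2^k + 2^k := by ring
  constructor
  · rw [Psh, h2, Finset.sum_range_add, Qsh, Finset.mul_sum]
    congr 1
    · exact Finset.sum_congr rfl fun n hn => by
        simp only [EF]
        rw [if_pos (Finset.mem_range.mp hn)]
    · refine Finset.sum_congr rfl fun n hn => ?_
      simp only [EF]
      rw [if_neg (by omega), Nat.add_sub_cancel_left]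
      push_cast
      rw [show ((2:ℂ)^k + n) * Complex.I * t = 2^k*Complex.I*t + n*Complex.I*t from by ring,
        Complex.exp_add]
      ring
  · rw [Qsh, h2, Finset.sum_range_add, Qsh, Finset.mul_sum, Psh, sub_eq_add_neg, ← Finset.sum_neg_distrib]
    congr 1
    · exact Finset.sum_congr rfl fun n hn => by
        simp only [EF]
        rw [if_pos (Finset.mem_range.mp hn)]
    · refine Finset.sum_congr rfl fun n hn => ?_
      simp only [EF]
      rw [if_neg (by omega), Nat.add_sub_cancel_left]
      push_cast
      rw [show ((2:ℂ)^k + n) * Complex.I * t = 2^k*Complex.I*t + n*Complex.I*t from by ring,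
        Complex.exp_add]
      ring

lemma key_sh (k : ℕ) (t : ℝ) :
    ‖Psh k t‖ ^ 2 + ‖Qsh k t‖ ^ 2 = 2 ^ (k+1) := by
  induction k with
  | zero =>
    norm_num [Psh, Qsh, EF]
  | succ k ih =>
    obtain ⟨hP, hQ⟩ := Psh_succ k t
    have hw : ‖Complex.exp ((2^k : ℕ) * Complex.I * t)‖ = 1 := by
      rw [show ((2^k : ℕ) * Complex.I * (t:ℂ)) = ((2^k * t : ℝ):ℂ) * Complex.I from by
        push_cast; ring, Complex.norm_exp_ofReal_mul_I]
    rw [hP, hQ]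
    have par := parallelogram_law_with_norm ℝ (Psh k t)
      (Complex.exp ((2^k : ℕ) * Complex.I * t) * Qsh k t)
    simp only [norm_mul, hw, one_mul] at par
    simp only [pow_two] at par ⊢
    rw [par, show ((2:ℝ))^(k+1+1) = 2 * 2^(k+1) from by ring, ← ih]
    ring

lemma int_cos_int (j : ℤ) (hj : j ≠ 0) :
    ∫ t in (0:ℝ)..(2*Real.pi), Real.cos (j * t) = 0 := by
  have hj' : (j:ℝ) ≠ 0 := Int.cast_ne_zero.mpr hj
  rw [intervalIntegral.integral_comp_mul_left Real.cos hj']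
  rw [mul_zero, integral_cos, Real.sin_zero,
    show (j:ℝ) * (2*Real.pi) = (2*j : ℤ) * Real.pi from by push_cast; ring,
    Real.sin_int_mul_pi]
  simp

lemma ortho (m n : ℕ) :
    ∫ t in (0:ℝ)..(2*Real.pi), Real.cos ((m+1)*t) * Real.cos ((n+1)*t)
      = if m = n then Real.pi else 0 := by
  have hrw : ∀ t : ℝ, Real.cos ((m+1)*t) * Real.cos ((n+1)*t)
      = (Real.cos ((((m:ℤ)-n) : ℤ) * t) + Real.cos ((((m:ℤ)+n+2) : ℤ) * t)) / 2 := by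
    intro t
    have := Real.two_mul_cos_mul_cos ((m+1)*t) ((n+1)*t)
    push_cast
    push_cast at this
    rw [show ((m:ℝ) - n) * t = (m+1)*t - (n+1)*t from by ring,
      show ((m:ℝ) + n + 2) * t = (m+1)*t + (n+1)*t from by ring]
    linarith [this]
  simp only [hrw]
  have h1 : IntervalIntegrable (fun t => Real.cos ((((m:ℤ)-n) : ℤ) * t)) MeasureTheory.volume 0 (2*Real.pi) :=
    (Real.continuous_cos.comp (continuous_const.mul continuous_id)).intervalIntegrable _ _
  have h2 : IntervalIntegrable (fun t => Real.cos ((((m:ℤ)+n+2) : ℤ) * t)) MeasureTheory.volume 0 (2*Real.pi) :=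
    (Real.continuous_cos.comp (continuous_const.mul continuous_id)).intervalIntegrable _ _
  rw [intervalIntegral.integral_div, intervalIntegral.integral_add h1 h2,
    int_cos_int ((m:ℤ)+n+2) (by omega)]
  by_cases h : m = n
  · subst h
    simp [Real.two_pi_pos.le]
  · rw [int_cos_int ((m:ℤ)-n) (by omega), if_neg h]
    simp

lemma sum_Icc_split {M : Type*} [AddCommMonoid M] (d : ℕ) (f : ℤ → M) :
    ∑ m ∈ Finset.Icc (-(d:ℤ)) (d:ℤ), f m
      = f 0 + ∑ n ∈ Finset.range d, (f (n+1) + f (-(n+1))) := by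
  induction d with
  | zero => simp
  | succ d ih =>
    have hins : Finset.Icc (-((d:ℤ)+1)) ((d:ℤ)+1)
        = insert (-((d:ℤ)+1)) (insert ((d:ℤ)+1) (Finset.Icc (-(d:ℤ)) (d:ℤ))) := by
      ext x; simp only [Finset.mem_Icc, Finset.mem_insert]; omega
    push_cast
    rw [hins, Finset.sum_insert (by simp only [Finset.mem_insert, Finset.mem_Icc]; omega),
      Finset.sum_insert (by simp only [Finset.mem_Icc]; omega), ih, Finset.sum_range_succ]
    push_cast
    abel

/-- Auxiliary polynomials: for every `q > 2` and `γ > 0` there is a real trigonometric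
polynomial `φ` with zero mean, `‖φ‖_∞ ≤ 1`, `‖φ‖_{L²} = 1/2`, and `‖φ‖_{A_q} < γ`. -/
theorem stmt9 (q γ : ℝ) (hq : 2 < q) (hγ : 0 < γ) :
    ∃ (d : ℕ) (a : ℤ → ℂ) (φ : ℝ → ℝ),
      (∀ t : ℝ, (φ t : ℂ) =
        ∑ k ∈ Finset.Icc (-(d : ℤ)) d, a k * Complex.exp (k * Complex.I * t)) ∧
      (∫ t in (0 : ℝ)..(2 * Real.pi), φ t) = 0 ∧
      (∀ t : ℝ, |φ t| ≤ 1) ∧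
      (1 / (2 * Real.pi)) * (∫ t in (0 : ℝ)..(2 * Real.pi), (φ t) ^ 2) = (1 / 2) ^ 2 ∧
      (∑ k ∈ Finset.Icc (-(d : ℤ)) d, ‖a k‖ ^ q) < γ ^ q := by
  have hq0 : q ≠ 0 := by linarith
  have hq2 : (0:ℝ) < q - 2 := by linarith
  have hγq : (0:ℝ) < 4 * γ ^ q := by positivity
  set ε : ℝ := min 1 ((4 * γ ^ q) ^ (q-2)⁻¹) with hε_def
  have hε : 0 < ε := lt_min one_pos (Real.rpow_pos_of_pos hγq _)
  have hs2 : 1 < Real.sqrt 2 := by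
    rw [show (1:ℝ) = Real.sqrt 1 from Real.sqrt_one.symm]
    exact Real.sqrt_lt_sqrt (by norm_num) (by norm_num)
  have hsq2 : (0:ℝ) < Real.sqrt 2 := by linarith
  have hinv : (Real.sqrt 2)⁻¹ < 1 := inv_lt_one_of_one_lt₀ hs2
  obtain ⟨k, hk⟩ := exists_pow_lt_of_lt_one hε hinv
  set c : ℝ := ((Real.sqrt 2)^(k+1))⁻¹ with hc_def
  have hc : 0 < c := by positivity
  set E : ℕ → ℝ := (EF k).1 with hE_def
  have hE : ∀ n, |E n| = 1 := fun n => (abs_EF k n).1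
  have hE1 : ∀ n, E n ^ 2 = 1 := fun n => by rw [← sq_abs, hE n]; norm_num
  set d := 2^k with hd_def
  set φ : ℝ → ℝ := fun t => ∑ n ∈ Finset.range d, c * E n * Real.cos ((n+1) * t) with hφ
  set a : ℤ → ℂ := fun m => if 1 ≤ m.natAbs ∧ m.natAbs ≤ d
      then ((c * E (m.natAbs - 1) / 2 : ℝ) : ℂ) else 0 with ha
  have ha0 : a 0 = 0 := by simp [ha]
  have hapos : ∀ n, n < d → a ((n:ℤ)+1) = ((c * E n / 2 : ℝ) : ℂ)
      ∧ a (-((n:ℤ)+1)) = ((c * E n / 2 : ℝ) : ℂ) := by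
    intro n hn
    have h1 : ((n:ℤ)+1).natAbs = n+1 := by omega
    have h2 : (-((n:ℤ)+1)).natAbs = n+1 := by omega
    constructor <;> simp only [ha, h1, h2] <;> rw [if_pos ⟨by omega, by omega⟩] <;> simp
  have hss : ((Real.sqrt 2)^(k+1))^2 = 2^(k+1) := by
    rw [← pow_mul, mul_comm, pow_mul, Real.sq_sqrt (by norm_num : (0:ℝ) ≤ 2)]
  have hc2 : c^2 = ((2:ℝ)^(k+1))⁻¹ := by
    rw [hc_def, inv_pow, hss]
  refine ⟨d, a, φ, ?_, ?_, ?_, ?_, ?_⟩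
  · -- representation
    intro t
    rw [sum_Icc_split d (fun m => a m * Complex.exp (m * Complex.I * t))]
    simp only [Int.cast_zero, zero_mul, ha0]
    rw [zero_add, hφ]
    push_cast
    refine Finset.sum_congr rfl fun n hn => ?_
    obtain ⟨hp, hm⟩ := hapos n (Finset.mem_range.mp hn)
    rw [hp, hm]
    have h2c := Complex.two_cos (((n:ℂ)+1) * (t:ℂ))
    push_cast
    rw [show ((n:ℂ)+1) * Complex.I * t = (((n:ℂ)+1)*t) * Complex.I from by ring,
        show (-((n:ℂ)+1)) * Complex.I * t = -((((n:ℂ)+1)*t)) * Complex.I from by ring]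
    linear_combination ((c:ℂ) * (E n) / 2) * h2c
  · -- zero mean
    rw [hφ]
    rw [intervalIntegral.integral_finset_sum (fun n _ => Continuous.intervalIntegrable (by fun_prop) _ _)]
    refine Finset.sum_eq_zero fun n hn => ?_
    rw [intervalIntegral.integral_const_mul]
    have h := int_cos_int ((n:ℤ)+1) (by omega)
    push_cast at h
    rw [h, mul_zero]
  · -- sup bound
    intro t
    have hre : φ t = c * ((Complex.exp (Complex.I * t) * Psh k t).re) := by
      rw [hφ, Psh, Finset.mul_sum, Complex.re_sum, Finset.mul_sum]
      refine Finset.sum_congr rfl fun n _ => ?_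
      have harg : Complex.exp (Complex.I * t) * (((E n : ℝ):ℂ) * Complex.exp ((n:ℂ) * Complex.I * t))
          = ((E n : ℝ):ℂ) * Complex.exp (((((n:ℝ)+1) * t : ℝ):ℂ) * Complex.I) := by
        rw [show (((((n:ℝ)+1) * t : ℝ):ℂ) * Complex.I) = (Complex.I * t) + ((n:ℂ) * Complex.I * t) from by
          push_cast; ring, Complex.exp_add]
        ring
      rw [harg, Complex.re_ofReal_mul, Complex.exp_ofReal_mul_I_re]
      push_cast
      ring
    rw [hre, abs_mul, abs_of_pos hc]
    have h1 : |(Complex.exp (Complex.I * t) * Psh k t).re| ≤ ‖Psh k t‖ := by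
      refine (Complex.abs_re_le_norm _).trans ?_
      rw [norm_mul, Complex.norm_exp]
      simp [Complex.mul_re]
    have h2 : ‖Psh k t‖ ≤ (Real.sqrt 2)^(k+1) := by
      nlinarith [key_sh k t, norm_nonneg (Psh k t), norm_nonneg (Qsh k t),
        pow_nonneg hsq2.le (k+1), hss]
    calc c * |(Complex.exp (Complex.I * t) * Psh k t).re| ≤ c * ((Real.sqrt 2)^(k+1)) := by
          exact mul_le_mul_of_nonneg_left (h1.trans h2) hc.le
      _ = 1 := by rw [hc_def]; field_simp
  · -- L² norm
    have hsq : (∫ t in (0:ℝ)..(2*Real.pi), (φ t)^2) = Real.pi / 2 := by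
      have hpt : ∀ t : ℝ, (φ t)^2 = ∑ n ∈ Finset.range d, ∑ m ∈ Finset.range d,
          (c * E n * (c * E m)) * (Real.cos ((n+1)*t) * Real.cos ((m+1)*t)) := by
        intro t
        rw [hφ]
        rw [sq, Finset.sum_mul_sum]
        exact Finset.sum_congr rfl fun n _ => Finset.sum_congr rfl fun m _ => by ring
      simp only [hpt]
      rw [intervalIntegral.integral_finset_sum (fun n _ => Continuous.intervalIntegrable (by fun_prop) _ _)]
      have hinner : ∀ n ∈ Finset.range d,
          (∫ t in (0:ℝ)..(2*Real.pi), ∑ m ∈ Finset.range d,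
            (c * E n * (c * E m)) * (Real.cos ((n+1)*t) * Real.cos ((m+1)*t)))
          = c^2 * Real.pi := by
        intro n hn
        rw [intervalIntegral.integral_finset_sum (fun m _ => Continuous.intervalIntegrable (by fun_prop) _ _)]
        have hterm : ∀ m ∈ Finset.range d,
            (∫ t in (0:ℝ)..(2*Real.pi),
              (c * E n * (c * E m)) * (Real.cos ((n+1)*t) * Real.cos ((m+1)*t)))
            = if n = m then (c * E n * (c * E m)) * Real.pi else 0 := by
          intro m _
          rw [intervalIntegral.integral_const_mul]
          have h := ortho n m
          push_cast at h
          rw [h]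
          split <;> simp
        rw [Finset.sum_congr rfl hterm, Finset.sum_ite_eq]
        rw [if_pos hn, show c * E n * (c * E n) = c^2 * (E n ^2) from by ring, hE1 n, mul_one]
      rw [Finset.sum_congr rfl hinner, Finset.sum_const, Finset.card_range, nsmul_eq_mul]
      rw [hc2, hd_def]
      push_cast
      rw [show (2:ℝ)^(k+1) = 2^k * 2 from by ring]
      have : (2:ℝ)^k ≠ 0 := by positivity
      field_simp
    rw [hsq]
    have : Real.pi ≠ 0 := Real.pi_ne_zero
    field_simp
  · -- A_q norm
    rw [sum_Icc_split d (fun m => ‖a m‖ ^ q)]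
    rw [ha0, norm_zero, Real.zero_rpow hq0, zero_add]
    have habs : ∀ n ∈ Finset.range d,
        ‖a ((n:ℤ)+1)‖ ^ q + ‖a (-((n:ℤ)+1))‖ ^ q
          = 2 * (c/2)^q := by
      intro n hn
      obtain ⟨hp, hm⟩ := hapos n (Finset.mem_range.mp hn)
      rw [hp, hm, Complex.norm_real, Real.norm_eq_abs]
      have habs2 : |c * E n / 2| = c/2 := by
        rw [abs_div, abs_mul, hE n, abs_of_pos hc]
        norm_num
      rw [habs2]
      ring
    rw [Finset.sum_congr rfl habs, Finset.sum_const, Finset.card_range, nsmul_eq_mul]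
    set x := c/2 with hx_def
    have hx : 0 < x := by positivity
    have hx48 : x = ((Real.sqrt 2)⁻¹)^(k+3) := by
      rw [hx_def, hc_def, inv_pow,
        show ((Real.sqrt 2))^(k+3) = (Real.sqrt 2)^(k+1) * 2 from by
          rw [show k+3 = (k+1)+2 from by ring, pow_add, Real.sq_sqrt (by norm_num : (0:ℝ) ≤ 2)],
        mul_inv]
      ring
    have hxε : x < ε := by
      rw [hx48]
      calc ((Real.sqrt 2)⁻¹)^(k+3) ≤ ((Real.sqrt 2)⁻¹)^k :=
            pow_le_pow_of_le_one (by positivity) (inv_le_one_of_one_le₀ hs2.le) (by omega)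
        _ < ε := hk
    have hx2 : x^(2:ℕ) = ((2:ℝ)^(k+3))⁻¹ := by
      have h4 : (2:ℝ)^(k+3) = 2^(k+1)*4 := by
        rw [show k+3 = (k+1)+2 from by ring, pow_add]; norm_num
      rw [hx_def, div_pow, hc2, h4, mul_inv]
      ring
    have hq_split : x ^ q = x^(2:ℕ) * x^(q-2) := by
      rw [← Real.rpow_natCast x 2, ← Real.rpow_add hx]
      norm_num
    have h1 : x^(q-2) < 4 * γ^q := by
      calc x^(q-2) < ε^(q-2) := Real.rpow_lt_rpow hx.le hxε hq2
        _ ≤ ((4*γ^q)^(q-2)⁻¹)^(q-2) := Real.rpow_le_rpow hε.le (min_le_right _ _) hq2.le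
        _ = 4*γ^q := Real.rpow_inv_rpow hγq.le (by linarith)
    have h2k1 : ((2:ℝ))^(k+1) ≠ 0 := by positivity
    calc (d:ℝ) * (2 * x^q) = 2^(k+1) * (x^(2:ℕ) * x^(q-2)) := by
          rw [hq_split, hd_def]; push_cast; ring
      _ = (1/4) * x^(q-2) := by
          rw [hx2, show (2:ℝ)^(k+3) = 2^(k+1)*4 from by ring]
          field_simp
      _ < (1/4) * (4*γ^q) := by linarith [h1]
      _ = γ^q := by ring
end

section
/- For each k ≥ 0 there exist signs ε_1, ..., ε_{2^k} ∈ {−1, +1} such that the trigonometric polynomial Q_k(t) = ∑_{n=1}^{2^k} ε_n cos(nt) satisfies sup_{t∈T} |Q_k(t)| ≤ 2^{(k+1)/2}. -/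
open Complex Finset

noncomputable def PQ : ℕ → ℝ → ℂ × ℂ
  | 0, _ => (1, 1)
  | (k+1), t => ((PQ k t).1 + Complex.exp (((2^k * t : ℝ) : ℂ) * Complex.I) * (PQ k t).2,
                 (PQ k t).1 - Complex.exp (((2^k * t : ℝ) : ℂ) * Complex.I) * (PQ k t).2)

noncomputable def ab : ℕ → (ℕ → ℝ) × (ℕ → ℝ)
  | 0 => (fun _ => 1, fun _ => 1)
  | (k+1) => (fun n => if n < 2^k then (ab k).1 n else (ab k).2 (n - 2^k),
              fun n => if n < 2^k then (ab k).1 n else -((ab k).2 (n - 2^k)))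

lemma par (a b : ℂ) : Complex.normSq (a + b) + Complex.normSq (a - b)
    = 2 * Complex.normSq a + 2 * Complex.normSq b := by
  simp only [Complex.normSq_apply, Complex.add_re, Complex.add_im, Complex.sub_re,
    Complex.sub_im]
  ring

lemma PQ_normSq (k : ℕ) (t : ℝ) :
    Complex.normSq (PQ k t).1 + Complex.normSq (PQ k t).2 = 2 ^ (k + 1) := by
  induction k with
  | zero => simp [PQ]; norm_num
  | succ k ih =>
      have h1 : Complex.normSq (Complex.exp (((2^k * t : ℝ) : ℂ) * Complex.I)) = 1 := by
        rw [Complex.normSq_eq_norm_sq, Complex.norm_exp_ofReal_mul_I]; norm_num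
      show Complex.normSq ((PQ k t).1 + _) + Complex.normSq ((PQ k t).1 - _) = _
      rw [par, Complex.normSq_mul, h1, one_mul]
      rw [show (2:ℝ)^(k+1+1) = 2 * 2^(k+1) by ring, ← ih]; ring

lemma ab_sign (k : ℕ) (n : ℕ) :
    ((ab k).1 n = 1 ∨ (ab k).1 n = -1) ∧ ((ab k).2 n = 1 ∨ (ab k).2 n = -1) := by
  induction k generalizing n with
  | zero => simp [ab]
  | succ k ih =>
      simp only [ab]
      by_cases h : n < 2^k
      · simpa [h] using (ih n).1
      · rcases (ih (n - 2^k)).2 with h2 | h2 <;> simp [h, h2]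

lemma PQ_sum (k : ℕ) (t : ℝ) :
    (PQ k t).1 = ∑ n ∈ range (2^k), ((ab k).1 n : ℂ) * Complex.exp (((n * t : ℝ) : ℂ) * Complex.I)
    ∧ (PQ k t).2 = ∑ n ∈ range (2^k), ((ab k).2 n : ℂ) * Complex.exp (((n * t : ℝ) : ℂ) * Complex.I) := by
  induction k with
  | zero => simp [PQ, ab]
  | succ k ih =>
      have hsplit : ∀ c : ℕ → ℝ,
          (∑ n ∈ range (2^(k+1)), (c n : ℂ) * Complex.exp (((n * t : ℝ) : ℂ) * Complex.I))
          = (∑ n ∈ range (2^k), (c n : ℂ) * Complex.exp (((n * t : ℝ) : ℂ) * Complex.I))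
            + ∑ n ∈ range (2^k), (c (2^k + n) : ℂ)
                * Complex.exp ((((2^k + n : ℕ) * t : ℝ) : ℂ) * Complex.I) := by
        intro c
        rw [show 2^(k+1) = 2^k + 2^k by ring, Finset.sum_range_add]
      have hexp : ∀ n : ℕ, Complex.exp ((((2^k + n : ℕ) * t : ℝ) : ℂ) * Complex.I)
          = Complex.exp (((2^k * t : ℝ) : ℂ) * Complex.I)
            * Complex.exp (((n * t : ℝ) : ℂ) * Complex.I) := by
        intro n
        rw [← Complex.exp_add]
        congr 1
        push_cast
        ring
      have hc1 : ∀ n ∈ range (2^k), ((ab (k+1)).1 n : ℂ) = ((ab k).1 n : ℂ) := by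
        intro n hn; simp [ab, Finset.mem_range.mp hn]
      have hc1' : ∀ n ∈ range (2^k), ((ab (k+1)).1 (2^k + n) : ℂ) = ((ab k).2 n : ℂ) := by
        intro n hn; simp [ab]
      have hc2 : ∀ n ∈ range (2^k), ((ab (k+1)).2 n : ℂ) = ((ab k).1 n : ℂ) := by
        intro n hn; simp [ab, Finset.mem_range.mp hn]
      have hc2' : ∀ n ∈ range (2^k), ((ab (k+1)).2 (2^k + n) : ℂ) = -((ab k).2 n : ℂ) := by
        intro n hn; simp [ab]
      constructor
      · show (PQ k t).1 + _ = _
        rw [hsplit, ih.1, ih.2]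
        congr 1
        · exact Finset.sum_congr rfl (fun n hn => by rw [hc1 n hn])
        · rw [Finset.mul_sum]
          refine Finset.sum_congr rfl (fun n hn => ?_)
          rw [hc1' n hn, hexp n]; ring
      · show (PQ k t).1 - _ = _
        rw [hsplit, ih.1, ih.2]
        rw [sub_eq_add_neg]
        congr 1
        · exact Finset.sum_congr rfl (fun n hn => by rw [hc2 n hn])
        · rw [Finset.mul_sum, ← Finset.sum_neg_distrib]
          refine Finset.sum_congr rfl (fun n hn => ?_)
          rw [hc2' n hn, hexp n]; ring

/-- Shapiro–Rudin polynomials: for each `k` there are signs `ε_n = ±1` such that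
`|∑_{n=1}^{2^k} ε_n cos(nt)| ≤ 2^{(k+1)/2}` for all `t`. -/
theorem stmt10 (k : ℕ) :
    ∃ ε : ℕ → ℝ, (∀ n, ε n = 1 ∨ ε n = -1) ∧
      ∀ t : ℝ, |∑ n ∈ Finset.Icc 1 (2 ^ k), ε n * Real.cos (n * t)|
        ≤ (2 : ℝ) ^ (((k : ℝ) + 1) / 2) := by
  refine ⟨fun n => (ab k).1 (n - 1), fun n => (ab_sign k (n - 1)).1, fun t => ?_⟩
  -- rewrite the sum as the real part of e^{it} * P_k(t)
  have hsum : (∑ n ∈ Finset.Icc 1 (2 ^ k), (ab k).1 (n - 1) * Real.cos (n * t))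
      = (Complex.exp ((t : ℂ) * Complex.I) * (PQ k t).1).re := by
    rw [(PQ_sum k t).1, Finset.mul_sum, Complex.re_sum]
    rw [show Finset.Icc 1 (2^k) = Finset.Ico 1 (2^k + 1) by rw [Finset.Ico_add_one_right_eq_Icc],
      Finset.sum_Ico_eq_sum_range]
    simp only [Nat.add_sub_cancel]
    refine Finset.sum_congr rfl (fun n _ => ?_)
    have : Complex.exp ((t : ℂ) * Complex.I) * (((ab k).1 n : ℂ)
        * Complex.exp (((n * t : ℝ) : ℂ) * Complex.I))
        = ((ab k).1 n : ℂ) * Complex.exp ((((1 + n : ℕ) * t : ℝ) : ℂ) * Complex.I) := by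
      rw [show Complex.exp ((t : ℂ) * Complex.I) * (((ab k).1 n : ℂ)
          * Complex.exp (((n * t : ℝ) : ℂ) * Complex.I))
          = ((ab k).1 n : ℂ) * (Complex.exp (((n * t : ℝ) : ℂ) * Complex.I)
            * Complex.exp ((t : ℂ) * Complex.I)) from by ring, ← Complex.exp_add]
      congr 2
      push_cast
      ring
    rw [this, Complex.re_ofReal_mul, Complex.exp_ofReal_mul_I_re]
    norm_num
  rw [hsum]
  -- bound |Re z| ≤ |z| = |P_k(t)| ≤ 2^{(k+1)/2}
  have h1 : |(Complex.exp ((t : ℂ) * Complex.I) * (PQ k t).1).re|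
      ≤ ‖(PQ k t).1‖ := by
    refine (Complex.abs_re_le_norm _).trans_eq ?_
    rw [norm_mul]
    rw [show (t : ℂ) * Complex.I = ((t : ℝ) : ℂ) * Complex.I from rfl,
      Complex.norm_exp_ofReal_mul_I, one_mul]
  refine h1.trans ?_
  have h2 : Complex.normSq (PQ k t).1 ≤ 2 ^ (k + 1) := by
    have := PQ_normSq k t
    nlinarith [Complex.normSq_nonneg (PQ k t).2]
  have h3 : ‖(PQ k t).1‖ ≤ Real.sqrt (2 ^ (k + 1)) := by
    rw [Complex.norm_def]
    exact Real.sqrt_le_sqrt h2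
  refine h3.trans_eq ?_
  rw [Real.sqrt_eq_rpow, ← Real.rpow_natCast 2 (k + 1), ← Real.rpow_mul (by norm_num)]
  congr 1
  push_cast
  ring
end

section
/- With φ, w, N, ν, s, λ_s as in the Riesz-product construction (∫φ = 0, ‖φ‖_∞ ≤ 1, ‖w‖_∞ ≤ 1, ν > 2 max(deg φ, N deg w), 0 < s < 1), define random variables X_j(t) = w(t)·φ(ν^j t) on the probability space (T, μ_s) where dμ_s = λ_s dt/2π. Then for every non-empty subset A ⊂ {1,...,N}: ∫_T (∏_{j∈A} X_j) dμ_s = (s·∫_T φ(t)² dt/2π)^{|A|} · (∫_T w(t)^{2|A|} dt/2π). -/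
open Complex intervalIntegral Finset

noncomputable section RieszAux

/-- `f` is a (complex-valued) trigonometric polynomial of degree at most `D`. -/
def TP (D : ℕ) (f : ℝ → ℂ) : Prop :=
  ∃ c : ℤ → ℂ, (∀ k : ℤ, k ∉ Finset.Icc (-(D : ℤ)) D → c k = 0) ∧
    ∀ t : ℝ, f t = ∑ k ∈ Finset.Icc (-(D : ℤ)) D, c k * Complex.exp (k * Complex.I * t)

lemma intE (k : ℤ) :
    (∫ t in (0:ℝ)..(2 * Real.pi), Complex.exp (k * Complex.I * t)) =
      if k = 0 then (2 * Real.pi : ℂ) else 0 := by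
  rcases eq_or_ne k 0 with hk | hk
  · simp [hk]
  · have hc : (k : ℂ) * Complex.I ≠ 0 := by
      simp [Complex.I_ne_zero, hk]
    rw [if_neg hk]
    have := integral_exp_mul_complex (a := 0) (b := 2 * Real.pi) hc
    rw [this]
    have h1 : ((k:ℂ) * Complex.I) * ((2 * Real.pi : ℝ) : ℂ) = k * (2 * Real.pi * Complex.I) := by
      push_cast; ring
    rw [h1, Complex.exp_int_mul_two_pi_mul_I]
    simp

lemma TP.continuous {D : ℕ} {f : ℝ → ℂ} (h : TP D f) : Continuous f := by
  obtain ⟨c, -, hrep⟩ := h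
  have : f = fun t : ℝ => ∑ k ∈ Finset.Icc (-(D : ℤ)) D, c k * Complex.exp (k * Complex.I * t) :=
    funext hrep
  rw [this]
  exact continuous_finset_sum _ fun k _ => by fun_prop

lemma TP.mono {D D' : ℕ} {f : ℝ → ℂ} (h : TP D f) (hDD : D ≤ D') : TP D' f := by
  obtain ⟨c, hc0, hrep⟩ := h
  have hsub : Finset.Icc (-(D : ℤ)) D ⊆ Finset.Icc (-(D' : ℤ)) D' := by
    apply Finset.Icc_subset_Icc <;> omega
  refine ⟨c, fun k hk => hc0 k fun hk' => hk (hsub hk'), fun t => ?_⟩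
  rw [hrep t, Finset.sum_subset hsub]
  intro k _ hk
  rw [hc0 k hk, zero_mul]

lemma TP.one : TP 0 (fun _ : ℝ => (1 : ℂ)) := by
  refine ⟨fun k => if k = 0 then 1 else 0, fun k hk => ?_, fun t => ?_⟩
  · simp only [Finset.mem_Icc] at hk
    push_cast at hk
    show (if k = 0 then (1:ℂ) else 0) = 0
    rw [if_neg (by omega)]
  · simp

lemma TP.mul {D E : ℕ} {f g : ℝ → ℂ} (hf : TP D f) (hg : TP E g) :
    TP (D + E) (fun t => f t * g t) := by
  obtain ⟨c, hc0, hcrep⟩ := hf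
  obtain ⟨d, hd0, hdrep⟩ := hg
  refine ⟨fun m => ∑ k ∈ Finset.Icc (-(D : ℤ)) D, c k * d (m - k), fun m hm => ?_, fun t => ?_⟩
  · apply Finset.sum_eq_zero
    intro k hk
    simp only [Finset.mem_Icc] at hk hm
    rw [hd0 (m - k), mul_zero]
    simp only [Finset.mem_Icc]
    push_cast
    omega
  · show f t * g t = _
    calc f t * g t
        = ∑ k ∈ Finset.Icc (-(D : ℤ)) D, ∑ l ∈ Finset.Icc (-(E : ℤ)) E,
            c k * d l * Complex.exp ((k + l : ℤ) * Complex.I * t) := by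
          rw [hcrep t, hdrep t, Finset.sum_mul_sum]
          refine Finset.sum_congr rfl fun k _ => Finset.sum_congr rfl fun l _ => ?_
          push_cast
          rw [add_mul, add_mul, Complex.exp_add]
          ring
      _ = ∑ k ∈ Finset.Icc (-(D : ℤ)) D, ∑ m ∈ Finset.Icc (-((D : ℤ) + E)) ((D : ℤ) + E),
            c k * d (m - k) * Complex.exp (m * Complex.I * t) := by
          refine Finset.sum_congr rfl fun k hk => ?_
          simp only [Finset.mem_Icc] at hk
          rw [show Finset.Icc (-((D : ℤ) + E)) ((D : ℤ) + E)
              = ((Finset.Icc (-(E : ℤ)) E).map (addRightEmbedding k)) ∪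
                ((Finset.Icc (-((D : ℤ) + E)) ((D : ℤ) + E)) \
                  ((Finset.Icc (-(E : ℤ)) E).map (addRightEmbedding k))) from ?_]
          · rw [Finset.sum_union Finset.disjoint_sdiff, Finset.sum_map]
            have h2 : ∀ m ∈ (Finset.Icc (-((D : ℤ) + E)) ((D : ℤ) + E)) \
                ((Finset.Icc (-(E : ℤ)) E).map (addRightEmbedding k)),
                c k * d (m - k) * Complex.exp (m * Complex.I * t) = 0 := by
              intro m hm
              simp only [Finset.mem_sdiff, Finset.mem_map, addRightEmbedding_apply,
                Finset.mem_Icc] at hm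
              rw [hd0 (m - k), mul_zero, zero_mul]
              simp only [Finset.mem_Icc]
              intro hcon
              exact hm.2 ⟨m - k, hcon, by ring⟩
            rw [Finset.sum_eq_zero h2, add_zero]
            refine Finset.sum_congr rfl fun l hl => ?_
            simp only [addRightEmbedding_apply, add_sub_cancel_right]
            ring_nf
          · rw [Finset.union_sdiff_of_subset]
            intro m hm
            simp only [Finset.mem_map, addRightEmbedding_apply, Finset.mem_Icc] at hm ⊢
            obtain ⟨l, hl, rfl⟩ := hm
            omega
      _ = _ := by
          rw [Finset.sum_comm]
          push_cast
          refine Finset.sum_congr rfl fun m _ => ?_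
          rw [Finset.sum_mul]

lemma TP.comp_scale {E M : ℕ} {g : ℝ → ℂ} (hg : TP E g) (hM : 0 < M) :
    TP (M * E) (fun t => g ((M : ℝ) * t)) := by
  obtain ⟨d, hd0, hdrep⟩ := hg
  have hM' : (M : ℤ) ≠ 0 := by exact_mod_cast hM.ne'
  set emb : ℤ ↪ ℤ := ⟨fun k => (M : ℤ) * k, mul_right_injective₀ hM'⟩ with hemb
  classical
  refine ⟨fun m => if h : (M : ℤ) ∣ m ∧ m / M ∈ Finset.Icc (-(E : ℤ)) E then d (m / M) else 0,
    fun m hm => ?_, fun t => ?_⟩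
  · show dite _ _ _ = 0
    rw [dif_neg]
    rintro ⟨⟨l, rfl⟩, hmem⟩
    rw [Int.mul_ediv_cancel_left _ hM'] at hmem
    simp only [Finset.mem_Icc] at hmem hm
    push_cast at hm ⊢
    apply hm
    constructor <;> nlinarith [hmem.1, hmem.2, (by exact_mod_cast hM : (0:ℤ) < M)]
  · show g ((M : ℝ) * t) = _
    rw [show Finset.Icc (-((M * E : ℕ) : ℤ)) ((M * E : ℕ) : ℤ)
        = ((Finset.Icc (-(E : ℤ)) E).map emb) ∪
          ((Finset.Icc (-((M * E : ℕ) : ℤ)) ((M * E : ℕ) : ℤ)) \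
            ((Finset.Icc (-(E : ℤ)) E).map emb)) from ?_]
    · rw [Finset.sum_union Finset.disjoint_sdiff, Finset.sum_map]
      have h2 : ∀ m ∈ (Finset.Icc (-((M * E : ℕ) : ℤ)) ((M * E : ℕ) : ℤ)) \
          ((Finset.Icc (-(E : ℤ)) E).map emb),
          (if h : (M : ℤ) ∣ m ∧ m / M ∈ Finset.Icc (-(E : ℤ)) E then d (m / M) else 0) *
            Complex.exp (m * Complex.I * t) = 0 := by
        intro m hm
        simp only [Finset.mem_sdiff, Finset.mem_map, hemb, Function.Embedding.coeFn_mk] at hm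
        rw [dif_neg, zero_mul]
        rintro ⟨⟨l, rfl⟩, hmem⟩
        rw [Int.mul_ediv_cancel_left _ hM'] at hmem
        exact hm.2 ⟨l, hmem, rfl⟩
      rw [Finset.sum_eq_zero h2, add_zero, hdrep ((M : ℝ) * t)]
      refine Finset.sum_congr rfl fun l hl => ?_
      simp only [hemb, Function.Embedding.coeFn_mk]
      rw [dif_pos ⟨⟨l, rfl⟩, by rwa [Int.mul_ediv_cancel_left _ hM']⟩,
        Int.mul_ediv_cancel_left _ hM']
      congr 1
      push_cast
      ring
    · rw [Finset.union_sdiff_of_subset]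
      intro m hm
      simp only [Finset.mem_map, hemb, Function.Embedding.coeFn_mk, Finset.mem_Icc] at hm ⊢
      obtain ⟨l, hl, rfl⟩ := hm
      push_cast
      constructor <;> nlinarith [hl.1, hl.2, (by exact_mod_cast hM : (0:ℤ) < M)]

lemma TP.pow {D : ℕ} {f : ℝ → ℂ} (hf : TP D f) (n : ℕ) : TP (n * D) (fun t => f t ^ n) := by
  induction n with
  | zero => simpa using TP.one
  | succ n ih =>
      have h1 := ih.mul hf
      have h2 : (n + 1) * D = n * D + D := by ring
      rw [h2]
      simp only [pow_succ]
      exact h1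

lemma TP.finset_prod {ι : Type*} (S : Finset ι) (f : ι → ℝ → ℂ) (D : ι → ℕ)
    (h : ∀ j ∈ S, TP (D j) (f j)) : TP (∑ j ∈ S, D j) (fun t => ∏ j ∈ S, f j t) := by
  classical
  induction S using Finset.induction_on with
  | empty => simpa using TP.one
  | insert a s hx ih =>
      rw [Finset.sum_insert hx]
      have h1 := (h a (Finset.mem_insert_self a s)).mul
        (ih fun j hj => h j (Finset.mem_insert_of_mem hj))
      simp only [Finset.prod_insert hx]
      exact h1

lemma integral_sum_exp (D : ℕ) (c : ℤ → ℂ) :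
    (∫ t in (0:ℝ)..(2 * Real.pi), ∑ k ∈ Finset.Icc (-(D : ℤ)) D,
        c k * Complex.exp (k * Complex.I * t)) = 2 * Real.pi * c 0 := by
  rw [intervalIntegral.integral_finset_sum (fun k _ => by
    apply Continuous.intervalIntegrable; fun_prop)]
  have h1 : ∀ k ∈ Finset.Icc (-(D : ℤ)) D,
      (∫ t in (0:ℝ)..(2 * Real.pi), c k * Complex.exp (k * Complex.I * t))
        = c k * (if k = 0 then (2 * Real.pi : ℂ) else 0) := fun k _ => by
    rw [intervalIntegral.integral_const_mul, intE]
  rw [Finset.sum_congr rfl h1, Finset.sum_eq_single_of_mem 0 (by simp)]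
  · simp [mul_comm]
  · intro k _ hk
    rw [if_neg hk, mul_zero]

lemma TP.integral {D : ℕ} {f : ℝ → ℂ} (c : ℤ → ℂ)
    (hrep : ∀ t : ℝ, f t = ∑ k ∈ Finset.Icc (-(D : ℤ)) D, c k * Complex.exp (k * Complex.I * t)) :
    (∫ t in (0:ℝ)..(2 * Real.pi), f t) = 2 * Real.pi * c 0 := by
  rw [intervalIntegral.integral_congr (g := fun t => ∑ k ∈ Finset.Icc (-(D : ℤ)) D,
    c k * Complex.exp (k * Complex.I * t)) (fun t _ => hrep t), integral_sum_exp]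

lemma keyA {D E M : ℕ} {f g : ℝ → ℂ} (hf : TP D f) (hg : TP E g) (hDM : D < M) :
    (∫ t in (0:ℝ)..(2 * Real.pi), f t * g ((M : ℝ) * t))
      = (1 / (2 * Real.pi : ℂ)) * (∫ t in (0:ℝ)..(2 * Real.pi), f t)
        * (∫ t in (0:ℝ)..(2 * Real.pi), g t) := by
  obtain ⟨c, hc0, hcrep⟩ := hf
  obtain ⟨d, hd0, hdrep⟩ := hg
  have hint : (∫ t in (0:ℝ)..(2 * Real.pi), f t * g ((M : ℝ) * t))
      = ∑ k ∈ Finset.Icc (-(D : ℤ)) D, ∑ l ∈ Finset.Icc (-(E : ℤ)) E,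
          c k * d l * (if (k + (M : ℤ) * l : ℤ) = 0 then (2 * Real.pi : ℂ) else 0) := by
    rw [intervalIntegral.integral_congr
      (g := fun t => ∑ k ∈ Finset.Icc (-(D : ℤ)) D, ∑ l ∈ Finset.Icc (-(E : ℤ)) E,
        c k * d l * Complex.exp ((k + (M : ℤ) * l : ℤ) * Complex.I * t))
      (fun t _ => by
        show f t * g ((M : ℝ) * t) = _
        rw [hcrep t, hdrep ((M : ℝ) * t), Finset.sum_mul_sum]
        refine Finset.sum_congr rfl fun k _ => Finset.sum_congr rfl fun l _ => ?_
        push_cast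
        rw [show ((k : ℂ) + M * l) * Complex.I * t
            = k * Complex.I * t + l * Complex.I * (M * t) by ring, Complex.exp_add]
        ring)]
    rw [intervalIntegral.integral_finset_sum (fun k _ => by
      apply Continuous.intervalIntegrable
      apply continuous_finset_sum
      intro l _
      fun_prop)]
    refine Finset.sum_congr rfl fun k _ => ?_
    rw [intervalIntegral.integral_finset_sum (fun l _ => by
      apply Continuous.intervalIntegrable; fun_prop)]
    refine Finset.sum_congr rfl fun l _ => ?_
    rw [intervalIntegral.integral_const_mul, intE]
  rw [hint, TP.integral c hcrep, TP.integral d hdrep]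
  rw [Finset.sum_eq_single_of_mem 0 (by simp)]
  · rw [Finset.sum_eq_single_of_mem 0 (by simp)]
    · have hπ : (2 * Real.pi : ℂ) ≠ 0 := by
        simp [Real.pi_ne_zero, Complex.ofReal_ne_zero]
      rw [if_pos (by simp)]
      field_simp
    · intro l _ hl
      rw [if_neg (by
        intro hcon
        apply hl
        have : (M : ℤ) * l = 0 := by omega
        rcases mul_eq_zero.mp this with h | h
        · exfalso; omega
        · exact h), mul_zero]
  · intro k hk hk0
    apply Finset.sum_eq_zero
    intro l hl
    rw [if_neg, mul_zero]
    intro hcon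
    simp only [Finset.mem_Icc] at hk hl
    rcases eq_or_ne l 0 with rfl | hl0
    · omega
    · have h1 : (M : ℤ) ≤ |(M : ℤ) * l| := by
        rw [abs_mul]
        have : (1 : ℤ) ≤ |l| := by
          rcases abs_pos.mpr hl0 with h
          omega
        have hM0 : (0 : ℤ) ≤ |(M : ℤ)| := abs_nonneg _
        calc (M : ℤ) ≤ |(M : ℤ)| * 1 := by
              rw [mul_one]; exact le_abs_self _
          _ ≤ |(M : ℤ)| * |l| := by
              apply mul_le_mul_of_nonneg_left this hM0
      have h2 : |(M : ℤ) * l| = |(k : ℤ)| := by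
        have : (M : ℤ) * l = -k := by omega
        rw [this, abs_neg]
      have h3 : |(k : ℤ)| ≤ D := abs_le.mpr hk
      have h4 : (D : ℤ) < M := by exact_mod_cast hDM
      omega

lemma deg_bound {dφ dw N ν : ℕ} (hφν : 2 * dφ < ν) (hwν : 2 * (N * dw) < ν) :
    ∀ J : ℕ, 2 * N * dw + ∑ j ∈ Finset.range J, 2 * dφ * ν ^ (j + 1) < ν ^ (J + 1) := by
  intro J
  induction J with
  | zero => simpa [mul_assoc] using hwν
  | succ J ih =>
      rw [Finset.sum_range_succ, ← add_assoc]
      have h1 : 2 * N * dw + ∑ j ∈ Finset.range J, 2 * dφ * ν ^ (j + 1) + 2 * dφ * ν ^ (J + 1)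
          < ν ^ (J + 1) + 2 * dφ * ν ^ (J + 1) := by omega
      have h2 : ν ^ (J + 1) + 2 * dφ * ν ^ (J + 1) = (1 + 2 * dφ) * ν ^ (J + 1) := by ring
      have h3 : (1 + 2 * dφ) * ν ^ (J + 1) ≤ ν * ν ^ (J + 1) :=
        Nat.mul_le_mul_right _ (by omega)
      calc 2 * N * dw + ∑ j ∈ Finset.range J, 2 * dφ * ν ^ (j + 1) + 2 * dφ * ν ^ (J + 1)
          < (1 + 2 * dφ) * ν ^ (J + 1) := by omega
        _ ≤ ν * ν ^ (J + 1) := h3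
        _ = ν ^ (J + 2) := by ring

lemma keyC {dφ dw N ν : ℕ} {φc wc : ℝ → ℂ} (hφ : TP dφ φc) (hw : TP dw wc)
    (hφν : 2 * dφ < ν) (hwν : 2 * (N * dw) < ν)
    (a : ℕ) (ha : a ≤ 2 * N) (e : Fin N → ℕ) (he : ∀ j, e j ≤ 2) (S : Finset (Fin N)) :
    (∫ t in (0:ℝ)..(2 * Real.pi),
        wc t ^ a * ∏ j ∈ S, φc ((ν : ℝ) ^ ((j : ℕ) + 1) * t) ^ (e j))
      = (∫ t in (0:ℝ)..(2 * Real.pi), wc t ^ a)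
        * ∏ j ∈ S, ((1 / (2 * Real.pi : ℂ)) * ∫ t in (0:ℝ)..(2 * Real.pi), φc t ^ (e j)) := by
  classical
  have hν0 : 0 < ν := by omega
  induction S using Finset.strongInductionOn with
  | _ S ih =>
    rcases S.eq_empty_or_nonempty with rfl | hS
    · simp
    · set J := S.max' hS with hJ
      have hJmem : J ∈ S := S.max'_mem hS
      set fLow : ℝ → ℂ := fun t => wc t ^ a *
        ∏ j ∈ S.erase J, φc ((ν : ℝ) ^ ((j : ℕ) + 1) * t) ^ (e j) with hfLow
      set Dlow : ℕ := a * dw + ∑ j ∈ S.erase J, e j * (ν ^ ((j : ℕ) + 1) * dφ) with hDlow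
      have hTPlow : TP Dlow fLow := by
        apply TP.mul (hw.pow a)
        apply TP.finset_prod
        intro j _
        have h1 := (hφ.comp_scale (M := ν ^ ((j : ℕ) + 1)) (Nat.pow_pos hν0)).pow (e j)
        have h2 : (fun t : ℝ => φc ((ν : ℝ) ^ ((j : ℕ) + 1) * t) ^ (e j))
            = fun t : ℝ => φc (((ν ^ ((j : ℕ) + 1) : ℕ) : ℝ) * t) ^ (e j) := by
          push_cast; rfl
        rw [h2]
        exact h1
      have hdeg : Dlow < ν ^ ((J : ℕ) + 1) := by
        have hb := deg_bound hφν hwν (J : ℕ)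
        have h1 : a * dw ≤ 2 * N * dw := Nat.mul_le_mul_right _ ha
        have h2 : ∑ j ∈ S.erase J, e j * (ν ^ ((j : ℕ) + 1) * dφ)
            ≤ ∑ m ∈ Finset.range (J : ℕ), 2 * dφ * ν ^ (m + 1) := by
          rw [show (∑ j ∈ S.erase J, e j * (ν ^ ((j : ℕ) + 1) * dφ))
              = ∑ m ∈ (S.erase J).image (Fin.val), e (⟨m % N, Nat.mod_lt _ (by omega)⟩ : Fin N)
                * (ν ^ (m + 1) * dφ) from ?_]
          · have hsub : (S.erase J).image (Fin.val) ⊆ Finset.range (J : ℕ) := by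
              intro m hm
              simp only [Finset.mem_image] at hm
              obtain ⟨j, hj, rfl⟩ := hm
              simp only [Finset.mem_erase] at hj
              have hle : j ≤ J := S.le_max' j hj.2
              have hlt : j < J := lt_of_le_of_ne hle hj.1
              exact Finset.mem_range.mpr hlt
            calc ∑ m ∈ (S.erase J).image (Fin.val),
                  e (⟨m % N, Nat.mod_lt _ (by omega)⟩ : Fin N) * (ν ^ (m + 1) * dφ)
                ≤ ∑ m ∈ (S.erase J).image (Fin.val), 2 * dφ * ν ^ (m + 1) := by
                  apply Finset.sum_le_sum
                  intro m _
                  calc e (⟨m % N, Nat.mod_lt _ (by omega)⟩ : Fin N) * (ν ^ (m + 1) * dφ)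
                      ≤ 2 * (ν ^ (m + 1) * dφ) := Nat.mul_le_mul_right _ (he _)
                    _ = 2 * dφ * ν ^ (m + 1) := by ring
              _ ≤ ∑ m ∈ Finset.range (J : ℕ), 2 * dφ * ν ^ (m + 1) :=
                  Finset.sum_le_sum_of_subset hsub
          · rw [Finset.sum_image (fun x _ y _ h => Fin.val_injective h)]
            refine Finset.sum_congr rfl fun j hj => ?_
            congr 1
            · congr 1
              apply Fin.ext
              simp [Nat.mod_eq_of_lt j.isLt]
        omega
      have hEq : ∀ t ∈ Set.uIcc (0:ℝ) (2 * Real.pi),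
          wc t ^ a * ∏ j ∈ S, φc ((ν : ℝ) ^ ((j : ℕ) + 1) * t) ^ (e j)
            = fLow t * (fun u => φc u ^ (e J)) (((ν ^ ((J : ℕ) + 1) : ℕ) : ℝ) * t) := by
        intro t _
        show _ = fLow t * φc ((((ν ^ ((J : ℕ) + 1) : ℕ)) : ℝ) * t) ^ (e J)
        rw [← Finset.mul_prod_erase S _ hJmem, hfLow]
        push_cast
        ring
      rw [intervalIntegral.integral_congr hEq, keyA hTPlow (hφ.pow (e J)) hdeg,
        ih (S.erase J) (Finset.erase_ssubset hJmem),
        ← Finset.mul_prod_erase S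
          (fun j => (1 / (2 * Real.pi : ℂ)) * ∫ t in (0:ℝ)..(2 * Real.pi), φc t ^ (e j)) hJmem]
      ring

end RieszAux

theorem stmt12' (dφ dw : ℕ) (aφ aw : ℤ → ℂ) (φ w : ℝ → ℝ)
    (hφrep : ∀ t : ℝ, (φ t : ℂ) =
      ∑ k ∈ Finset.Icc (-(dφ : ℤ)) dφ, aφ k * Complex.exp (k * Complex.I * t))
    (hwrep : ∀ t : ℝ, (w t : ℂ) =
      ∑ k ∈ Finset.Icc (-(dw : ℤ)) dw, aw k * Complex.exp (k * Complex.I * t))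
    (hφ0 : (∫ t in (0 : ℝ)..(2 * Real.pi), φ t) = 0)
    (N : ℕ) (hN : 0 < N) (ν : ℕ) (hν : 2 * max dφ (N * dw) < ν)
    (s : ℝ)
    (A : Finset (Fin N)) (hA : A.Nonempty) :
    (1 / (2 * Real.pi)) * (∫ t in (0 : ℝ)..(2 * Real.pi),
        (∏ j ∈ A, w t * φ ((ν : ℝ) ^ ((j : ℕ) + 1) * t)) *
          ∏ j ∈ Finset.range N, (1 + s * w t * φ ((ν : ℝ) ^ (j + 1) * t)))
      = (s * ((1 / (2 * Real.pi)) * ∫ t in (0 : ℝ)..(2 * Real.pi), (φ t) ^ 2)) ^ A.card *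
        ((1 / (2 * Real.pi)) * ∫ t in (0 : ℝ)..(2 * Real.pi), (w t) ^ (2 * A.card)) := by
  classical
  set φc : ℝ → ℂ := fun u => ((φ u : ℝ) : ℂ) with hφc
  set wc : ℝ → ℂ := fun u => ((w u : ℝ) : ℂ) with hwc
  have hφTP : TP dφ φc := by
    refine ⟨fun k => if k ∈ Finset.Icc (-(dφ : ℤ)) dφ then aφ k else 0, fun k hk => ?_, fun t => ?_⟩
    · simp only [if_neg hk]
    · rw [hφc]
      show ((φ t : ℝ) : ℂ) = _
      rw [hφrep t]
      exact (Finset.sum_congr rfl fun k hk => by simp only [if_pos hk]).symm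
  have hwTP : TP dw wc := by
    refine ⟨fun k => if k ∈ Finset.Icc (-(dw : ℤ)) dw then aw k else 0, fun k hk => ?_, fun t => ?_⟩
    · simp only [if_neg hk]
    · rw [hwc]
      show ((w t : ℝ) : ℂ) = _
      rw [hwrep t]
      exact (Finset.sum_congr rfl fun k hk => by simp only [if_pos hk]).symm
  have hφν : 2 * dφ < ν := by have := le_max_left dφ (N * dw); omega
  have hwν : 2 * (N * dw) < ν := by have := le_max_right dφ (N * dw); omega
  have hφcont : Continuous φc := hφTP.continuous
  have hwcont : Continuous wc := hwTP.continuous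
  have hφ0c : (∫ t in (0 : ℝ)..(2 * Real.pi), φc t) = 0 := by
    rw [hφc]
    rw [intervalIntegral.integral_ofReal, hφ0, Complex.ofReal_zero]
  -- the exponent function for a subset B
  have hcard : ∀ B : Finset (Fin N), A.card + B.card ≤ 2 * N := by
    intro B
    have h1 : A.card ≤ N := by simpa using Finset.card_le_univ A
    have h2 : B.card ≤ N := by simpa using Finset.card_le_univ B
    omega
  -- pointwise expansion of the integrand
  have hpt : ∀ t : ℝ,
      (∏ j ∈ A, wc t * φc ((ν : ℝ) ^ ((j : ℕ) + 1) * t)) *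
          ∏ j ∈ Finset.range N, (1 + (s : ℂ) * wc t * φc ((ν : ℝ) ^ (j + 1) * t))
        = ∑ B ∈ (Finset.univ : Finset (Fin N)).powerset, (s : ℂ) ^ B.card *
            (wc t ^ (A.card + B.card) * ∏ j ∈ A ∪ B,
              φc ((ν : ℝ) ^ ((j : ℕ) + 1) * t) ^ (if j ∈ A ∩ B then 2 else 1)) := by
    intro t
    rw [← Fin.prod_univ_eq_prod_range
      (fun j => (1 + (s : ℂ) * wc t * φc ((ν : ℝ) ^ (j + 1) * t))) N]
    rw [Finset.prod_congr rfl (fun (j : Fin N) _ => add_comm 1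
      ((s : ℂ) * wc t * φc ((ν : ℝ) ^ ((j : ℕ) + 1) * t)))]
    rw [Finset.prod_add, Finset.mul_sum]
    refine Finset.sum_congr rfl fun B hB => ?_
    rw [Finset.prod_const_one, mul_one, Finset.prod_mul_distrib, Finset.prod_mul_distrib,
      Finset.prod_const, Finset.prod_const]
    have hsplit : ∏ j ∈ A ∪ B,
        φc ((ν : ℝ) ^ ((j : ℕ) + 1) * t) ^ (if j ∈ A ∩ B then 2 else 1)
        = (∏ j ∈ A, φc ((ν : ℝ) ^ ((j : ℕ) + 1) * t))
          * ∏ j ∈ B, φc ((ν : ℝ) ^ ((j : ℕ) + 1) * t) := by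
      rw [← Finset.prod_union_inter]
      have h1 : ∀ j ∈ A ∪ B,
          φc ((ν : ℝ) ^ ((j : ℕ) + 1) * t) ^ (if j ∈ A ∩ B then 2 else 1)
          = φc ((ν : ℝ) ^ ((j : ℕ) + 1) * t)
            * (if j ∈ A ∩ B then φc ((ν : ℝ) ^ ((j : ℕ) + 1) * t) else 1) := by
        intro j _
        split_ifs with h
        · rw [pow_two]
        · rw [pow_one, mul_one]
      rw [Finset.prod_congr rfl h1, Finset.prod_mul_distrib,
        Finset.prod_ite_mem (A ∪ B) (A ∩ B),
        Finset.inter_eq_right.mpr (Finset.inter_subset_union)]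
    rw [hsplit]
    ring
  -- the complex-valued main identity
  have hmain : (1 / (2 * Real.pi : ℂ)) * (∫ t in (0 : ℝ)..(2 * Real.pi),
        (∏ j ∈ A, wc t * φc ((ν : ℝ) ^ ((j : ℕ) + 1) * t)) *
          ∏ j ∈ Finset.range N, (1 + (s : ℂ) * wc t * φc ((ν : ℝ) ^ (j + 1) * t)))
      = ((s : ℂ) * ((1 / (2 * Real.pi : ℂ)) * ∫ t in (0 : ℝ)..(2 * Real.pi), φc t ^ 2)) ^ A.card *
        ((1 / (2 * Real.pi : ℂ)) * ∫ t in (0 : ℝ)..(2 * Real.pi), wc t ^ (2 * A.card)) := by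
    rw [intervalIntegral.integral_congr (fun t _ => hpt t)]
    rw [intervalIntegral.integral_finset_sum (fun B _ => by
      apply Continuous.intervalIntegrable
      apply Continuous.mul continuous_const
      apply Continuous.mul (by fun_prop)
      apply continuous_finset_prod
      intro j _
      fun_prop)]
    have hterm : ∀ B ∈ (Finset.univ : Finset (Fin N)).powerset,
        (∫ t in (0:ℝ)..(2 * Real.pi), (s : ℂ) ^ B.card *
          (wc t ^ (A.card + B.card) * ∏ j ∈ A ∪ B,
            φc ((ν : ℝ) ^ ((j : ℕ) + 1) * t) ^ (if j ∈ A ∩ B then 2 else 1)))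
        = (s : ℂ) ^ B.card *
          ((∫ t in (0:ℝ)..(2 * Real.pi), wc t ^ (A.card + B.card))
            * ∏ j ∈ A ∪ B, ((1 / (2 * Real.pi : ℂ)) *
              ∫ t in (0:ℝ)..(2 * Real.pi), φc t ^ (if j ∈ A ∩ B then 2 else 1))) := by
      intro B _
      rw [intervalIntegral.integral_const_mul]
      rw [keyC hφTP hwTP hφν hwν (A.card + B.card) (hcard B)
        (fun j => if j ∈ A ∩ B then 2 else 1) (fun j => by split_ifs <;> omega) (A ∪ B)]
    rw [Finset.sum_congr rfl hterm]
    rw [Finset.sum_eq_single_of_mem A (Finset.mem_powerset.mpr (Finset.subset_univ A))]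
    · rw [Finset.union_self, Finset.inter_self]
      have h1 : ∀ j ∈ A, ((1 / (2 * Real.pi : ℂ)) *
          ∫ t in (0:ℝ)..(2 * Real.pi), φc t ^ (if j ∈ A then 2 else 1))
          = (1 / (2 * Real.pi : ℂ)) * ∫ t in (0:ℝ)..(2 * Real.pi), φc t ^ 2 := by
        intro j hj
        rw [if_pos hj]
      rw [Finset.prod_congr rfl h1, Finset.prod_const, show A.card + A.card = 2 * A.card by ring,
        mul_pow]
      ring
    · intro B _ hBA
      have hnot : ¬ (A ∪ B ⊆ A ∩ B) := by
        intro hsub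
        apply hBA
        apply Finset.Subset.antisymm
        · intro x hx
          exact (Finset.mem_inter.mp (hsub (Finset.mem_union_right A hx))).1
        · intro x hx
          exact (Finset.mem_inter.mp (hsub (Finset.mem_union_left B hx))).2
      obtain ⟨j, hjU, hjI⟩ := Finset.not_subset.mp hnot
      rw [Finset.prod_eq_zero hjU (by
        rw [if_neg hjI]
        simp only [pow_one]
        rw [hφ0c, mul_zero]), mul_zero, mul_zero]
  -- transfer back to the reals
  have coe1 : ((∫ t in (0 : ℝ)..(2 * Real.pi),
        (∏ j ∈ A, w t * φ ((ν : ℝ) ^ ((j : ℕ) + 1) * t)) *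
          ∏ j ∈ Finset.range N, (1 + s * w t * φ ((ν : ℝ) ^ (j + 1) * t)) : ℝ) : ℂ)
      = ∫ t in (0 : ℝ)..(2 * Real.pi),
        (∏ j ∈ A, wc t * φc ((ν : ℝ) ^ ((j : ℕ) + 1) * t)) *
          ∏ j ∈ Finset.range N, (1 + (s : ℂ) * wc t * φc ((ν : ℝ) ^ (j + 1) * t)) := by
    rw [← intervalIntegral.integral_ofReal]
    refine intervalIntegral.integral_congr fun t _ => ?_
    push_cast
    rfl
  have coe2 : ((∫ t in (0 : ℝ)..(2 * Real.pi), (φ t) ^ 2 : ℝ) : ℂ)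
      = ∫ t in (0 : ℝ)..(2 * Real.pi), φc t ^ 2 := by
    rw [← intervalIntegral.integral_ofReal]
    refine intervalIntegral.integral_congr fun t _ => ?_
    push_cast
    rfl
  have coe3 : ((∫ t in (0 : ℝ)..(2 * Real.pi), (w t) ^ (2 * A.card) : ℝ) : ℂ)
      = ∫ t in (0 : ℝ)..(2 * Real.pi), wc t ^ (2 * A.card) := by
    rw [← intervalIntegral.integral_ofReal]
    refine intervalIntegral.integral_congr fun t _ => ?_
    push_cast
    rfl
  apply Complex.ofReal_injective
  push_cast [coe1, coe2, coe3]
  push_cast at hmain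
  convert hmain using 2

/-- Multiplicative moments with respect to the Riesz-product measure: with
`X_j(t) = w(t)·φ(ν^j t)` and `dμ_s = λ_s dt/2π`, for every non-empty
`A ⊆ {1,…,N}` one has
`∫ ∏_{j∈A} X_j dμ_s = (s ∫ φ² dt/2π)^{|A|} · ∫ w^{2|A|} dt/2π`. -/
theorem stmt12 (dφ dw : ℕ) (aφ aw : ℤ → ℂ) (φ w : ℝ → ℝ)
    (hφrep : ∀ t : ℝ, (φ t : ℂ) =
      ∑ k ∈ Finset.Icc (-(dφ : ℤ)) dφ, aφ k * Complex.exp (k * Complex.I * t))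
    (hwrep : ∀ t : ℝ, (w t : ℂ) =
      ∑ k ∈ Finset.Icc (-(dw : ℤ)) dw, aw k * Complex.exp (k * Complex.I * t))
    (hφ0 : (∫ t in (0 : ℝ)..(2 * Real.pi), φ t) = 0)
    (hφsup : ∀ t, |φ t| ≤ 1) (hwsup : ∀ t, |w t| ≤ 1)
    (N : ℕ) (hN : 0 < N) (ν : ℕ) (hν : 2 * max dφ (N * dw) < ν)
    (s : ℝ) (hs : 0 < s) (hs1 : s < 1)
    (A : Finset (Fin N)) (hA : A.Nonempty) :
    (1 / (2 * Real.pi)) * (∫ t in (0 : ℝ)..(2 * Real.pi),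
        (∏ j ∈ A, w t * φ ((ν : ℝ) ^ ((j : ℕ) + 1) * t)) *
          ∏ j ∈ Finset.range N, (1 + s * w t * φ ((ν : ℝ) ^ (j + 1) * t)))
      = (s * ((1 / (2 * Real.pi)) * ∫ t in (0 : ℝ)..(2 * Real.pi), (φ t) ^ 2)) ^ A.card *
        ((1 / (2 * Real.pi)) * ∫ t in (0 : ℝ)..(2 * Real.pi), (w t) ^ (2 * A.card)) :=
  stmt12' dφ dw aφ aw φ w hφrep hwrep hφ0 N hN ν hν s A hA
end

section
/- Let T*: C(K)* → B* be the adjoint of the restriction operator T: B → C(K), where B is the Wiener algebra A(T) equipped with the norm ‖f‖_B = ‖f‖_A + (1/ε)‖f‖_{A_p} (p > 1, ε > 0 fixed), and K ⊂ T is compact. Then for every measure μ supported on K, ‖T*μ‖_{B*} ≥ limsup_{|n|→∞} |μ̂(n)|. -/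
open MeasureTheory

private lemma aux_int (n : ℤ) (ρ : Measure (AddCircle (2 * Real.pi)))
    (g : AddCircle (2 * Real.pi) → ℂ) (hgi : Integrable g ρ) :
    Integrable (fun t => fourier n t * g t) ρ :=
  hgi.bdd_mul (map_continuous (fourier n)).aestronglyMeasurable
    (c := 1) (Filter.Eventually.of_forall fun x => by simp [fourier_apply, Circle.norm_coe])

private lemma aux_int_rev (n : ℤ) (ρ : Measure (AddCircle (2 * Real.pi)))
    (g : AddCircle (2 * Real.pi) → ℂ)
    (h : Integrable (fun t => g t * fourier n t) ρ) : Integrable g ρ := by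
  have h2 : Integrable (fun t => fourier (-n) t * (g t * fourier n t)) ρ :=
    h.bdd_mul (map_continuous (fourier (-n))).aestronglyMeasurable
      (c := 1) (Filter.Eventually.of_forall fun x => by simp [fourier_apply, Circle.norm_coe])
  have heq : (fun t : AddCircle (2 * Real.pi) => fourier (-n) t * (g t * fourier n t)) = g := by
    ext t
    have h1 : (fourier (-n) : C(AddCircle (2 * Real.pi), ℂ)) t * fourier n t = 1 := by
      rw [← fourier_add]; simp [fourier_zero]
    calc (fourier (-n)) t * (g t * (fourier n) t)
        = ((fourier (-n)) t * (fourier n) t) * g t := by ring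
      _ = g t := by rw [h1, one_mul]
  rwa [heq] at h2

private lemma aux_norm (p ε : ℝ) (hp : 1 < p) (hε : 0 < ε) (N : ℕ) (hN1 : 1 ≤ N) :
    ((N : ℝ) * (1 + (1/ε) * (N:ℝ) ^ (1/p - 1)))⁻¹ * (N : ℝ) +
      (1/ε) * ((N:ℝ) * (((N:ℝ) * (1 + (1/ε) * (N:ℝ) ^ (1/p-1)))⁻¹) ^ p) ^ (1/p) ≤ 1 := by
  have hp0 : p ≠ 0 := by positivity
  have hN : (0:ℝ) < N := by exact_mod_cast Nat.lt_of_lt_of_le Nat.zero_lt_one hN1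
  set C : ℝ := 1 + (1/ε) * (N:ℝ) ^ (1/p - 1) with hC
  have hCpos : 0 < C := by
    have : 0 ≤ (1/ε) * (N:ℝ) ^ (1/p-1) := mul_nonneg (by positivity) (Real.rpow_nonneg hN.le _)
    rw [hC]; linarith
  set r : ℝ := ((N:ℝ) * C)⁻¹ with hr
  have hrpos : 0 < r := by rw [hr]; positivity
  have h1 : ((N:ℝ) * r ^ p) ^ (1/p) = (N:ℝ) ^ (1/p) * r := by
    rw [Real.mul_rpow hN.le (Real.rpow_nonneg hrpos.le _), ← Real.rpow_mul hrpos.le,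
      mul_one_div_cancel hp0, Real.rpow_one]
  rw [h1]
  have h2 : (N:ℝ) ^ (1/p) = (N:ℝ) ^ (1/p - 1) * N := by
    rw [← Real.rpow_add_one hN.ne' (1/p - 1)]; ring_nf
  have h3 : r * (N:ℝ) = C⁻¹ := by
    rw [hr, mul_comm ((N:ℝ) * C)⁻¹, mul_inv, ← mul_assoc, mul_inv_cancel₀ hN.ne', one_mul]
  calc r * (N:ℝ) + (1/ε) * ((N:ℝ) ^ (1/p) * r)
      = (r * N) * (1 + (1/ε) * (N:ℝ) ^ (1/p-1)) := by rw [h2]; ring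
    _ = C⁻¹ * C := by rw [h3, ← hC]
    _ = 1 := inv_mul_cancel₀ hCpos.ne'
    _ ≤ 1 := le_refl 1

/-- Lower bound for the dual norm of the restriction operator: for a measure
`μ = g dρ` supported on the compact `K`, the supremum of `|∫ f dμ|` over
Wiener-algebra functions `f` with `‖f‖_A + (1/ε)‖f‖_{A_p} ≤ 1` is at least
`limsup_{|n|→∞} |μ̂(n)|`. -/
theorem stmt17 (p ε : ℝ) (hp : 1 < p) (hε : 0 < ε)
    (K : Set (AddCircle (2 * Real.pi))) (hK : IsCompact K)
    (ρ : Measure (AddCircle (2 * Real.pi))) [IsFiniteMeasure ρ]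
    (g : AddCircle (2 * Real.pi) → ℂ) (hg : Measurable g)
    (hsupp : ρ Kᶜ = 0) :
    Filter.limsup (fun n : ℤ => ‖∫ t, g t * fourier (-n) t ∂ρ‖)
        Filter.cofinite
      ≤ sSup {x : ℝ | ∃ a : ℤ → ℂ, Summable (fun k => ‖a k‖) ∧
          (∑' k : ℤ, ‖a k‖) +
            (1 / ε) * (∑' k : ℤ, ‖a k‖ ^ p) ^ (1 / p) ≤ 1 ∧
          x = ‖∫ t, (∑' k : ℤ, a k * fourier k t) * g t ∂ρ‖} := by
  have hp0 : p ≠ 0 := by positivity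
  set S : Set ℝ := {x : ℝ | ∃ a : ℤ → ℂ, Summable (fun k => ‖a k‖) ∧
          (∑' k : ℤ, ‖a k‖) +
            (1 / ε) * (∑' k : ℤ, ‖a k‖ ^ p) ^ (1 / p) ≤ 1 ∧
          x = ‖∫ t, (∑' k : ℤ, a k * fourier k t) * g t ∂ρ‖} with hS
  -- `0 ∈ S`, via `a = 0`.
  have h0S : (0 : ℝ) ∈ S := by
    refine ⟨0, by simpa using summable_zero, ?_, by simp⟩
    simp only [Pi.zero_apply, norm_zero, Real.zero_rpow hp0, tsum_zero,
      Real.zero_rpow (one_div_ne_zero hp0), mul_zero, add_zero]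
    norm_num
  have hSnn : (0 : ℝ) ≤ sSup S := Real.sSup_nonneg' ⟨0, h0S, le_refl 0⟩
  set μh : ℤ → ℂ := fun n => ∫ t, g t * fourier (-n) t ∂ρ with hμh
  by_cases hgi : Integrable g ρ
  · -- main case
    -- boundedness of S
    have hbdd : BddAbove S := by
      refine ⟨∫ t, ‖g t‖ ∂ρ, ?_⟩
      rintro x ⟨a, hsum, hnorm, rfl⟩
      have ha1 : (∑' k : ℤ, ‖a k‖) ≤ 1 := by
        have h2 : 0 ≤ (1 / ε) * (∑' k : ℤ, ‖a k‖ ^ p) ^ (1 / p) := by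
          apply mul_nonneg (by positivity)
          apply Real.rpow_nonneg
          exact tsum_nonneg fun k => Real.rpow_nonneg (norm_nonneg _) _
        linarith
      have hfb : ∀ t : AddCircle (2 * Real.pi), ‖(∑' k : ℤ, a k * fourier k t)‖ ≤ 1 := by
        intro t
        refine le_trans (norm_tsum_le_tsum_norm ?_) ?_
        · simpa [map_mul, fourier_apply, Circle.norm_coe] using hsum
        · refine le_trans (le_of_eq ?_) ha1
          congr 1; ext k
          simp [map_mul, fourier_apply, Circle.norm_coe]
      calc ‖∫ t, (∑' k : ℤ, a k * fourier k t) * g t ∂ρ‖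
          = ‖∫ t, (∑' k : ℤ, a k * fourier k t) * g t ∂ρ‖ :=
            rfl
        _ ≤ ∫ t, ‖(∑' k : ℤ, a k * fourier k t) * g t‖ ∂ρ :=
            norm_integral_le_integral_norm _
        _ ≤ ∫ t, ‖g t‖ ∂ρ := by
            refine integral_mono_of_nonneg (Filter.Eventually.of_forall fun t => norm_nonneg _)
              hgi.norm (Filter.Eventually.of_forall fun t => ?_)
            show ‖(∑' k : ℤ, a k * fourier k t) * g t‖ ≤ ‖g t‖
            rw [norm_mul]
            calc ‖(∑' k : ℤ, a k * fourier k t)‖ * ‖g t‖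
                ≤ 1 * ‖g t‖ := mul_le_mul_of_nonneg_right (hfb t) (norm_nonneg _)
              _ = ‖g t‖ := one_mul _
    by_contra hcon
    push_neg at hcon
    set L := Filter.limsup (fun n : ℤ => ‖μh n‖) Filter.cofinite with hL
    change sSup S < L at hcon
    set c : ℝ := (sSup S + L) / 2 with hc
    have hc1 : sSup S < c := by rw [hc]; linarith
    have hc2 : c < L := by rw [hc]; linarith
    have hcpos : 0 < c := lt_of_le_of_lt hSnn hc1
    -- frequently c < |μ̂ n|
    have hcb : Filter.IsCoboundedUnder (· ≤ ·) Filter.cofinite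
        (fun n : ℤ => ‖μh n‖) :=
      Filter.isCoboundedUnder_le_of_le _ (fun n => norm_nonneg _)
    have hfreq : {n : ℤ | c < ‖μh n‖}.Infinite := by
      rw [← Filter.frequently_cofinite_iff_infinite]
      exact Filter.frequently_lt_of_lt_limsup hcb hc2
    -- choose N
    have htend : Filter.Tendsto (fun N : ℕ => (1 / ε) * (N : ℝ) ^ (1 / p - 1))
        Filter.atTop (nhds 0) := by
      have h1 : (0 : ℝ) < 1 - 1 / p := by
        have : 1 / p < 1 := by
          rw [div_lt_one (by positivity)]; exact hp
        linarith
      have h2 : Filter.Tendsto (fun x : ℝ => x ^ (-(1 - 1 / p))) Filter.atTop (nhds 0) :=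
        tendsto_rpow_neg_atTop h1
      have h3 : Filter.Tendsto (fun N : ℕ => ((N : ℝ)) ^ (1 / p - 1)) Filter.atTop (nhds 0) := by
        have := h2.comp tendsto_natCast_atTop_atTop (α := ℕ)
        simpa [Function.comp_def, neg_sub] using this
      simpa using h3.const_mul (1 / ε)
    have hev : ∀ᶠ N : ℕ in Filter.atTop,
        (1 / ε) * (N : ℝ) ^ (1 / p - 1) < (c - sSup S) / (sSup S + 1) := by
      apply htend.eventually_lt_const
      apply div_pos (by linarith) (by linarith)
    obtain ⟨N, hN1, hNlt⟩ :
        ∃ N : ℕ, 1 ≤ N ∧ (1 / ε) * (N : ℝ) ^ (1 / p - 1) < (c - sSup S) / (sSup S + 1) := by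
      rcases (hev.and (Filter.eventually_ge_atTop 1)).exists with ⟨N, hN⟩
      exact ⟨N, hN.2, hN.1⟩
    have hNpos : (0 : ℝ) < (N : ℝ) := by
      exact_mod_cast Nat.lt_of_lt_of_le Nat.zero_lt_one hN1
    set C : ℝ := 1 + (1 / ε) * (N : ℝ) ^ (1 / p - 1) with hCdef
    have hCge1 : 1 ≤ C := by
      have h0 : 0 ≤ (1 / ε) * (N : ℝ) ^ (1 / p - 1) :=
        mul_nonneg (by positivity) (Real.rpow_nonneg hNpos.le _)
      rw [hCdef]; linarith
    have hCpos : 0 < C := lt_of_lt_of_le one_pos hCge1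
    -- key inequality: sSup S < c / C
    have hkey : sSup S < c / C := by
      rw [lt_div_iff₀ hCpos, hCdef, mul_add, mul_one]
      have h1 : sSup S * ((1 / ε) * (N : ℝ) ^ (1 / p - 1)) ≤
          (sSup S + 1) * ((1 / ε) * (N : ℝ) ^ (1 / p - 1)) := by
        apply mul_le_mul_of_nonneg_right (by linarith)
          (mul_nonneg (by positivity) (Real.rpow_nonneg hNpos.le _))
      have h2 : (sSup S + 1) * ((1 / ε) * (N : ℝ) ^ (1 / p - 1)) < c - sSup S := by
        rw [← lt_div_iff₀' (by linarith : (0:ℝ) < sSup S + 1)]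
        exact hNlt
      linarith
    -- choose N frequencies
    obtain ⟨t, hts, htcard⟩ := hfreq.exists_subset_card_eq N
    set r : ℝ := ((N : ℝ) * C)⁻¹ with hr
    have hrpos : 0 < r := by rw [hr]; positivity
    set w : ℤ → ℂ := fun n => (‖μh n‖ : ℂ) / μh n with hw
    have hμne : ∀ n ∈ t, μh n ≠ 0 := by
      intro n hn
      have hmem := hts hn
      simp only [Set.mem_setOf_eq] at hmem
      intro h
      rw [h] at hmem
      simp at hmem
      exact absurd hmem (not_lt.mpr hcpos.le)
    have hwabs : ∀ n ∈ t, ‖w n‖ = 1 := by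
      intro n hn
      simp only [hw, norm_div, Complex.norm_real, Real.norm_eq_abs]
      rw [abs_of_nonneg (norm_nonneg _)]
      exact div_self (norm_ne_zero_iff.mpr (hμne n hn))
    have hwmul : ∀ n ∈ t, w n * μh n = (‖μh n‖ : ℂ) := by
      intro n hn
      simp only [hw]
      exact div_mul_cancel₀ _ (hμne n hn)
    set a : ℤ → ℂ := fun k => if -k ∈ t then (r : ℂ) * w (-k) else 0 with ha
    set s : Finset ℤ := t.image (fun n => -n) with hsdef
    have hmem : ∀ k : ℤ, k ∈ s ↔ -k ∈ t := by
      intro k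
      simp only [hsdef, Finset.mem_image]
      constructor
      · rintro ⟨n, hn, rfl⟩; simpa using hn
      · intro h; exact ⟨-k, h, by ring⟩
    have hoff : ∀ k ∉ s, a k = 0 := by
      intro k hk
      simp only [ha, ite_eq_right_iff]
      intro h
      exact absurd ((hmem k).mpr h) hk
    have hscard : s.card = N := by
      rw [hsdef, Finset.card_image_of_injective _ neg_injective, htcard]
    have habs : ∀ k ∈ s, ‖a k‖ = r := by
      intro k hk
      simp only [ha, (hmem k).mp hk, if_true, norm_mul, Complex.norm_real, Real.norm_eq_abs,
        abs_of_pos hrpos, hwabs _ ((hmem k).mp hk), mul_one]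
    have hsum : Summable (fun k => ‖a k‖) :=
      summable_of_ne_finset_zero (s := s) (fun k hk => by rw [hoff k hk]; simp)
    -- the ℓ¹ norm
    have htsum1 : (∑' k : ℤ, ‖a k‖) = r * N := by
      rw [tsum_eq_sum (s := s) (fun k hk => by rw [hoff k hk]; simp),
        Finset.sum_congr rfl habs, Finset.sum_const, hscard]
      simp [mul_comm]
    -- the ℓᵖ norm
    have htsump : (∑' k : ℤ, ‖a k‖ ^ p) = (N : ℝ) * r ^ p := by
      rw [tsum_eq_sum (s := s) (fun k hk => by
        rw [hoff k hk]; simp [Real.zero_rpow hp0]),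
        Finset.sum_congr rfl (fun k hk => by rw [habs k hk]), Finset.sum_const, hscard]
      simp
    have hnorm : (∑' k : ℤ, ‖a k‖) +
        (1 / ε) * (∑' k : ℤ, ‖a k‖ ^ p) ^ (1 / p) ≤ 1 := by
      rw [htsum1, htsump, hr, hCdef]
      exact aux_norm p ε hp hε N hN1
    -- integral computation
    have hint : ∀ k : ℤ, Integrable (fun t => a k * fourier k t * g t) ρ := by
      intro k
      have h1 : Integrable (fun t => fourier k t * g t) ρ := aux_int k ρ g hgi
      simpa [mul_assoc] using h1.const_mul (a k)
    have hf_eq : ∀ t : AddCircle (2 * Real.pi),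
        (∑' k : ℤ, a k * fourier k t) = ∑ k ∈ s, a k * fourier k t := by
      intro t
      exact tsum_eq_sum (fun k hk => by rw [hoff k hk]; simp)
    have hintegral : (∫ t, (∑' k : ℤ, a k * fourier k t) * g t ∂ρ)
        = ∑ k ∈ s, a k * μh (-k) := by
      calc (∫ t, (∑' k : ℤ, a k * fourier k t) * g t ∂ρ)
          = ∫ t, ∑ k ∈ s, a k * fourier k t * g t ∂ρ := by
            congr 1; ext t; rw [hf_eq t, Finset.sum_mul]
        _ = ∑ k ∈ s, ∫ t, a k * fourier k t * g t ∂ρ :=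
            integral_finset_sum s (fun k _ => hint k)
        _ = ∑ k ∈ s, a k * μh (-k) := by
            refine Finset.sum_congr rfl fun k _ => ?_
            rw [hμh]
            simp only [neg_neg]
            rw [← integral_const_mul]
            congr 1; ext t; ring
    have hval : (∑ k ∈ s, a k * μh (-k)) = ((r * ∑ n ∈ t, ‖μh n‖ : ℝ) : ℂ) := by
      have h4 : (∑ k ∈ t.image (fun n => -n), a k * μh (-k)) = ∑ n ∈ t, a (-n) * μh (-(-n)) :=
        Finset.sum_image (fun x _ y _ h => neg_injective h)
      rw [hsdef, h4]
      simp only [neg_neg]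
      have hterm : ∀ n ∈ t, a (-n) * μh n = (r : ℂ) * (‖μh n‖ : ℂ) := by
        intro n hn
        simp only [ha, neg_neg, hn, if_true]
        rw [mul_assoc, hwmul n hn]
      rw [Finset.sum_congr rfl hterm, ← Finset.mul_sum]
      push_cast
      rfl
    -- the element of S
    have hxmem : (r * ∑ n ∈ t, ‖μh n‖) ∈ S := by
      refine ⟨a, hsum, hnorm, ?_⟩
      rw [hintegral, hval, Complex.norm_real, Real.norm_eq_abs, abs_of_nonneg]
      apply mul_nonneg hrpos.le
      exact Finset.sum_nonneg fun n _ => norm_nonneg _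
    -- lower bound on the element
    have hlow : c / C ≤ r * ∑ n ∈ t, ‖μh n‖ := by
      have h1 : (N : ℝ) * c ≤ ∑ n ∈ t, ‖μh n‖ := by
        calc (N : ℝ) * c = ∑ _n ∈ t, c := by rw [Finset.sum_const, htcard]; ring
          _ ≤ ∑ n ∈ t, ‖μh n‖ :=
            Finset.sum_le_sum fun n hn => (le_of_lt (hts hn))
      calc c / C = r * ((N : ℝ) * c) := by rw [hr]; field_simp
        _ ≤ r * ∑ n ∈ t, ‖μh n‖ :=
            mul_le_mul_of_nonneg_left h1 hrpos.le
    have hfin : r * ∑ n ∈ t, ‖μh n‖ ≤ sSup S := le_csSup hbdd hxmem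
    linarith [lt_of_lt_of_le hkey hlow]
  · -- g is not integrable: all Fourier coefficients are 0
    have hz : ∀ n : ℤ, μh n = 0 := fun n =>
      integral_undef (fun hc => hgi (aux_int_rev (-n) ρ g hc))
    have hconst : (fun n : ℤ => ‖μh n‖) = fun _ => (0 : ℝ) := by
      ext n; rw [hz n]; simp
    calc Filter.limsup (fun n : ℤ => ‖μh n‖) Filter.cofinite
        = (0 : ℝ) := by rw [hconst, Filter.limsup_const]
      _ ≤ sSup S := hSnn
end
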